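/- arXiv:math/0502402 — 6 statements merged into one kernel-verified Lean document; each statement's English description precedes it below -/
import Mathlib

section
/- If f : X → Y is a homotopy equivalence with f(p) = q, then the induced map f* : π₁(X,p) → π₁(Y,q) of topological fundamental groups is both a group isomorphism and a homeomorphism. -/
open unitInterval Topology

noncomputable section

/-- The topological fundamental group: path components of the based loop space
(compact-open topology), with the quotient topology. -/
def piTop (Z : Type*) [TopologicalSpace Z] (z : Z) : Type _ :=
  Quotient (pathSetoid (Path z z))

instance (Z : Type*) [TopologicalSpace Z] (z : Z) : TopologicalSpace (piTop Z z) :=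
  instTopologicalSpaceQuotient

/-- The class of a loop in the topological fundamental group. -/
def piMk {Z : Type*} [TopologicalSpace Z] {z : Z} (γ : Path z z) : piTop Z z :=
  Quotient.mk _ γ

section Aux
attribute [local instance] Path.Homotopic.setoid
open CategoryTheory
open scoped FundamentalGroupoid

variable {A B : Type*} [TopologicalSpace A] [TopologicalSpace B]

theorem myJoined_of_homotopic {x y : A} {u v : Path x y} (h : u.Homotopic v) : Joined u v := by
  obtain ⟨F⟩ := h
  refine ⟨⟨⟨fun t => F.eval t, ?_⟩, F.eval_zero, F.eval_one⟩⟩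
  rw [← Path.continuous_uncurry_iff]
  exact F.continuous

theorem myContinuous_path_map {x y : A} (f : C(A, B)) :
    Continuous (fun a : Path x y => a.map f.continuous) := by
  rw [← Path.continuous_uncurry_iff]
  exact f.continuous.comp (continuous_fst.eval continuous_snd)

theorem myContinuous_trans_left {x y z : A} (e : Path x y) :
    Continuous (fun a : Path y z => e.trans a) := by
  rw [← Path.continuous_uncurry_iff]
  exact Path.trans_continuous_family (fun _ => e)
    (e.continuous.comp continuous_snd) (fun a => a) (continuous_fst.eval continuous_snd)

theorem myContinuous_trans_right {x y z : A} (e : Path y z) :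
    Continuous (fun a : Path x y => a.trans e) := by
  rw [← Path.continuous_uncurry_iff]
  exact Path.trans_continuous_family (fun a => a) (continuous_fst.eval continuous_snd)
    (fun _ => e) (e.continuous.comp continuous_snd)

theorem myAssoc {w x y z : A} (p : Path w x) (q : Path x y) (r : Path y z) :
    ((p.trans q).trans r).Homotopic (p.trans (q.trans r)) := ⟨Path.Homotopy.transAssoc p q r⟩

theorem myTransRefl {x y : A} (p : Path x y) : (p.trans (Path.refl y)).Homotopic p :=
  ⟨Path.Homotopy.transRefl p⟩

theorem myReflTrans {x y : A} (p : Path x y) : ((Path.refl x).trans p).Homotopic p :=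
  ⟨Path.Homotopy.reflTrans p⟩

theorem myTransSymm {x y : A} (p : Path x y) : (p.trans p.symm).Homotopic (Path.refl x) :=
  ⟨(Path.Homotopy.reflTransSymm p).symm⟩

theorem mySymmTrans {x y : A} (p : Path x y) : (p.symm.trans p).Homotopic (Path.refl y) :=
  ⟨(Path.Homotopy.reflSymmTrans p).symm⟩

theorem myL {x y : A} (e : Path x y) (c : Path y y) :
    (e.symm.trans ((e.trans (c.trans e.symm)).trans e)).Homotopic c := by
  have inner : ((c.trans e.symm).trans e).Homotopic c :=
    (myAssoc c e.symm e).trans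
      (((Path.Homotopic.refl c).hcomp (mySymmTrans e)).trans (myTransRefl c))
  have mid : ((e.trans (c.trans e.symm)).trans e).Homotopic (e.trans c) :=
    (myAssoc e (c.trans e.symm) e).trans ((Path.Homotopic.refl e).hcomp inner)
  refine ((Path.Homotopic.refl e.symm).hcomp mid).trans ?_
  exact ((myAssoc e.symm e c).symm).trans
    (((mySymmTrans e).hcomp (Path.Homotopic.refl c)).trans (myReflTrans c))

theorem myL' {x y : A} (e : Path x y) (w : Path x x) :
    (e.trans ((e.symm.trans (w.trans e)).trans e.symm)).Homotopic w := by
  have := myL e.symm w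
  rwa [Path.symm_symm] at this

universe u
theorem myConj_aux {A : Type u} [TopologicalSpace A] {φ ψ : C(A, A)} (H : φ.Homotopy ψ)
    {x₀ x₁ : A} (a : Path x₀ x₁) :
    ((a.map φ.continuous).trans (H.evalAt x₁)).Homotopic
      ((H.evalAt x₀).trans (a.map ψ.continuous)) := by
  have h := ContinuousMap.Homotopy.eq_diag_path (X := TopCat.of A) (Y := TopCat.of A)
    (f := φ) (g := ψ) H (x₀ := x₀) (x₁ := x₁) ⟦a⟧
  have key := h.1.trans h.2.symm
  exact Quotient.exact (key : (⟦(a.map φ.continuous).trans (H.evalAt x₁)⟧ : Path.Homotopic.Quotient _ _) =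
    ⟦(H.evalAt x₀).trans (a.map ψ.continuous)⟧)

theorem myConj_loop {A : Type u} [TopologicalSpace A] {φ ψ : C(A, A)} (H : φ.Homotopy ψ)
    {x : A} (a : Path x x) :
    (a.map φ.continuous).Homotopic
      ((H.evalAt x).trans ((a.map ψ.continuous).trans (H.evalAt x).symm)) := by
  set u := a.map φ.continuous
  set v := a.map ψ.continuous
  set e := H.evalAt x
  have k : (u.trans e).Homotopic (e.trans v) := myConj_aux H a
  have h1 : u.Homotopic ((u.trans e).trans e.symm) :=
    ((myTransRefl u).symm.trans ((Path.Homotopic.refl u).hcomp (myTransSymm e).symm)).trans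
      (myAssoc u e e.symm).symm
  exact h1.trans ((k.hcomp (Path.Homotopic.refl e.symm)).trans (myAssoc e v e.symm))

end Aux

theorem myCast_self {A : Type*} [TopologicalSpace A] {x y : A} (γ : Path x y)
    (hx : x = x) (hy : y = y) : γ.cast hx hy = γ := rfl

/-- a homotopy equivalence `f : X → Y` with `f p = q` induces a map
`f* : π₁(X,p) → π₁(Y,q)` of topological fundamental groups that is both a group
isomorphism (it is bijective and preserves concatenation) and a homeomorphism. -/
theorem homotopy_equivalence_induces_homeo_iso
    (X Y : Type*) [TopologicalSpace X] [TopologicalSpace Y]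
    (h : ContinuousMap.HomotopyEquiv X Y) (p : X) (q : Y) (hq : h.toFun p = q) :
    ∃ φ : piTop X p ≃ₜ piTop Y q,
      (∀ a : Path p p,
        φ (piMk a) = piMk ((a.map h.toFun.continuous).cast hq.symm hq.symm)) ∧
      (∀ a b : Path p p,
        φ (piMk (a.trans b)) =
          piMk (((a.map h.toFun.continuous).cast hq.symm hq.symm).trans
            ((b.map h.toFun.continuous).cast hq.symm hq.symm))) := by
  subst hq
  obtain ⟨H₁⟩ := h.left_inv
  obtain ⟨H₂⟩ := h.right_inv
  set f : C(X, Y) := h.toFun with hf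
  set g : C(Y, X) := h.invFun with hg
  set γ : Path (g (f p)) p := H₁.evalAt p with hγ
  set δ : Path (f (g (f p))) (f p) := H₂.evalAt (f p) with hδ
  set Fm : Path p p → Path (f p) (f p) := fun a => a.map f.continuous with hFm
  set Gm : Path (f p) (f p) → Path p p :=
    fun b => γ.symm.trans ((b.map g.continuous).trans γ) with hGm
  set Pm : Path p p → Path (f p) (f p) :=
    fun c => δ.symm.trans (((γ.trans (c.trans γ.symm)).map f.continuous).trans δ) with hPm
  have hFc : Continuous Fm := myContinuous_path_map f
  have hGc : Continuous Gm :=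
    (myContinuous_trans_left γ.symm).comp
      ((myContinuous_trans_right γ).comp (myContinuous_path_map g))
  have hPc : Continuous Pm :=
    (myContinuous_trans_left δ.symm).comp
      ((myContinuous_trans_right δ).comp
        ((myContinuous_path_map f).comp
          ((myContinuous_trans_left γ).comp (myContinuous_trans_right γ.symm))))
  have presF : ∀ a b : Path p p, Joined a b → Joined (Fm a) (Fm b) :=
    fun a b hab => ⟨hab.somePath.map hFc⟩
  have presG : ∀ a b : Path (f p) (f p), Joined a b → Joined (Gm a) (Gm b) :=
    fun a b hab => ⟨hab.somePath.map hGc⟩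
  have presP : ∀ a b : Path p p, Joined a b → Joined (Pm a) (Pm b) :=
    fun a b hab => ⟨hab.somePath.map hPc⟩
  let F : piTop X p → piTop Y (f p) := Quotient.map Fm presF
  let G : piTop Y (f p) → piTop X p := Quotient.map Gm presG
  let P : piTop X p → piTop Y (f p) := Quotient.map Pm presP
  -- key homotopies
  have hGF : ∀ a : Path p p, (Gm (Fm a)).Homotopic a := by
    intro a
    have k := myConj_loop H₁ a
    rw [show a.map (ContinuousMap.id X).continuous = a from Path.map_id a] at k
    have e1 : (a.map f.continuous).map g.continuous = a.map (g.comp f).continuous :=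
      Path.map_map a f.continuous g.continuous
    have : (Gm (Fm a)).Homotopic (γ.symm.trans ((γ.trans (a.trans γ.symm)).trans γ)) := by
      show (γ.symm.trans (((a.map f.continuous).map g.continuous).trans γ)).Homotopic _
      rw [e1]
      exact (Path.Homotopic.refl γ.symm).hcomp (k.hcomp (Path.Homotopic.refl γ))
    exact this.trans (myL γ a)
  have hPG : ∀ b : Path (f p) (f p), (Pm (Gm b)).Homotopic b := by
    intro b
    have inner : (γ.trans ((Gm b).trans γ.symm)).Homotopic (b.map g.continuous) :=
      myL' γ (b.map g.continuous)
    have innerF : ((γ.trans ((Gm b).trans γ.symm)).map f.continuous).Homotopic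
        (b.map (f.comp g).continuous) := by
      have := inner.map f
      rwa [Path.map_map b g.continuous f.continuous] at this
    have k := myConj_loop H₂ b
    rw [show b.map (ContinuousMap.id Y).continuous = b from Path.map_id b] at k
    have : (Pm (Gm b)).Homotopic (δ.symm.trans ((δ.trans (b.trans δ.symm)).trans δ)) :=
      (Path.Homotopic.refl δ.symm).hcomp ((innerF.trans k).hcomp (Path.Homotopic.refl δ))
    exact this.trans (myL δ b)
  -- quotient level
  have hGF' : ∀ x : piTop X p, G (F x) = x := fun x =>
    Quotient.inductionOn x fun a =>
      Quotient.sound (myJoined_of_homotopic (hGF a))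
  have hPG' : ∀ y : piTop Y (f p), P (G y) = y := fun y =>
    Quotient.inductionOn y fun b =>
      Quotient.sound (myJoined_of_homotopic (hPG b))
  have hGinj : Function.Injective G := by
    intro x y hxy
    rw [← hPG' x, ← hPG' y, hxy]
  have hFG' : ∀ y : piTop Y (f p), F (G y) = y := fun y => hGinj (hGF' (G y))
  refine ⟨⟨⟨F, G, hGF', hFG'⟩, ?_, ?_⟩, ?_, ?_⟩
  · exact hFc.quotient_map' (s := pathSetoid _) (t := pathSetoid _) presF
  · exact hGc.quotient_map' (s := pathSetoid _) (t := pathSetoid _) presG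
  · intro a
    rfl
  · intro a b
    show F (Quotient.mk _ (a.trans b)) = Quotient.mk _ _
    rw [show F (Quotient.mk _ (a.trans b)) = Quotient.mk _ (Fm (a.trans b)) from rfl]
    rw [myCast_self, myCast_self]
    congr 1
    exact Path.map_trans a b f.continuous
end
end

section
/- If X is locally contractible, then the topological fundamental group π₁(X,p) is discrete for every p ∈ X. -/
open unitInterval Topology

noncomputable section

/-- `Z` is locally contractible: every neighborhood `U` of every point contains a
neighborhood `V` such that the inclusion `V ↪ U` is null-homotopic. -/
def LocallyContractible (Z : Type*) [TopologicalSpace Z] : Prop :=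
  ∀ x : Z, ∀ U ∈ 𝓝 x, ∃ V ∈ 𝓝 x, ∃ h : V ⊆ U, ∃ c : ↥U,
    (⟨Set.inclusion h, continuous_inclusion h⟩ : C(↥V, ↥U)).Homotopic
      (ContinuousMap.const ↥V c)

open Set

section HelperSection

attribute [local instance] Path.Homotopic.setoid

instance : ContractibleSpace I :=
  (convex_Icc (0:ℝ) 1).contractibleSpace (Set.nonempty_Icc.2 zero_le_one)

variable {X : Type*} [TopologicalSpace X]

/-- The "linear" path in the unit interval from `u` to `v`. -/
def linI (u v : I) : Path u v where
  toFun s := ⟨(1 - s.1) * u.1 + s.1 * v.1, by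
    constructor <;> nlinarith [s.2.1, s.2.2, u.2.1, u.2.2, v.2.1, v.2.2]⟩
  continuous_toFun := by
    apply Continuous.subtype_mk; fun_prop
  source' := Subtype.ext (by simp)
  target' := Subtype.ext (by simp)

theorem linI_apply (u v : I) (s : I) :
    linI u v s = ⟨(1 - s.1) * u.1 + s.1 * v.1, ((linI u v) s).2⟩ := rfl

theorem linI_range {u v : I} (h : u ≤ v) : Set.range (linI u v) ⊆ Set.Icc u v := by
  rintro x ⟨s, rfl⟩
  have hs1 := s.2.1; have hs2 := s.2.2
  have h' : u.1 ≤ v.1 := h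
  constructor
  · show u.1 ≤ (1 - s.1) * u.1 + s.1 * v.1; nlinarith
  · show (1 - s.1) * u.1 + s.1 * v.1 ≤ v.1; nlinarith

theorem homotopic_of_pointwise {a b c d : X} {q q' : Path a b} {r r' : Path c d}
    (h : r.Homotopic r') (hq : ∀ s, q s = r s) (hq' : ∀ s, q' s = r' s) :
    q.Homotopic q' := by
  have hac : a = c := by rw [← q.source, hq 0, r.source]
  have hbd : b = d := by rw [← q.target, hq 1, r.target]
  subst hac; subst hbd
  have h1 : q = r := Path.ext (funext hq)
  have h2 : q' = r' := Path.ext (funext hq')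
  rw [h1, h2]; exact h

theorem homotopic_of_via {a b : X} {u v : I} (F : C(I, X)) (g g' : Path u v)
    {q q' : Path a b} (hq : ∀ s, q s = F (g s)) (hq' : ∀ s, q' s = F (g' s)) :
    q.Homotopic q' :=
  homotopic_of_pointwise ((SimplyConnectedSpace.paths_homotopic g g').map F)
    (fun s => by rw [hq s, Path.map_coe]; rfl)
    (fun s => by rw [hq' s, Path.map_coe]; rfl)

theorem trans_pointwise {a b c : X} {u v w : I} {F : I → X}
    {A : Path a b} {B : Path b c} {gA : Path u v} {gB : Path v w}
    (hA : ∀ s, A s = F (gA s)) (hB : ∀ s, B s = F (gB s)) :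
    ∀ s, (A.trans B) s = F ((gA.trans gB) s) := by
  intro s
  rw [Path.trans_apply, Path.trans_apply]
  split_ifs
  · exact hA _
  · exact hB _
open CategoryTheory FundamentalGroupoid in
theorem core {V U : Set X} (hVU : V ⊆ U) (c : ↥U)
    (G : (⟨Set.inclusion hVU, continuous_inclusion hVU⟩ : C(↥V, ↥U)).Homotopic
      (ContinuousMap.const ↥V c))
    {a b : X} {q q' : Path a b} (hq : Set.range q ⊆ V) (hq' : Set.range q' ⊆ V) :
    q.Homotopic q' := by
  have ha : a ∈ V := hq ⟨0, q.source⟩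
  have hb : b ∈ V := hq ⟨1, q.target⟩
  set f : C(↥V, ↥U) := ⟨Set.inclusion hVU, continuous_inclusion hVU⟩ with hf
  set g : C(↥V, ↥U) := ContinuousMap.const ↥V c with hgdef
  have H : f.Homotopy g := G.some
  let qV : Path (⟨a, ha⟩ : ↥V) ⟨b, hb⟩ :=
    ⟨⟨fun s => ⟨q s, hq (Set.mem_range_self s)⟩, q.continuous.subtype_mk _⟩,
      Subtype.ext q.source, Subtype.ext q.target⟩
  let qV' : Path (⟨a, ha⟩ : ↥V) ⟨b, hb⟩ :=
    ⟨⟨fun s => ⟨q' s, hq' (Set.mem_range_self s)⟩, q'.continuous.subtype_mk _⟩,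
      Subtype.ext q'.source, Subtype.ext q'.target⟩
  -- move to TopCat
  let VT : TopCat := TopCat.of ↥V
  let UT : TopCat := TopCat.of ↥U
  let fT : VT ⟶ UT := TopCat.ofHom f
  let gT : VT ⟶ UT := TopCat.ofHom g
  let α := FundamentalGroupoidFunctor.homotopicMapsNatIso (X := VT) (Y := UT) H
  have h1 := α.naturality (X := fromTop (X := VT) ⟨a, ha⟩) (Y := fromTop (X := VT) ⟨b, hb⟩) ⟦qV⟧
  have h2 := α.naturality (X := fromTop (X := VT) ⟨a, ha⟩) (Y := fromTop (X := VT) ⟨b, hb⟩) ⟦qV'⟧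
  have hg : (FundamentalGroupoid.map g).map (X := fromTop (X := VT) ⟨a, ha⟩) (Y := fromTop (X := VT) ⟨b, hb⟩) ⟦qV⟧
      = (FundamentalGroupoid.map g).map (X := fromTop (X := VT) ⟨a, ha⟩) (Y := fromTop (X := VT) ⟨b, hb⟩) ⟦qV'⟧ := by
    rfl
  rw [hg] at h1
  have key : (πₘ fT).map (show fromTop (X := VT) ⟨a, ha⟩ ⟶ fromTop ⟨b, hb⟩ from ⟦qV⟧)
      = (πₘ fT).map (show fromTop (X := VT) ⟨a, ha⟩ ⟶ fromTop ⟨b, hb⟩ from ⟦qV'⟧) :=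
    (cancel_mono (α.app (fromTop (X := VT) ⟨b, hb⟩))).mp (h1.trans h2.symm)
  change (⟦qV.map f.continuous⟧ : Path.Homotopic.Quotient _ _) = ⟦qV'.map f.continuous⟧ at key
  have hU : (qV.map f.continuous).Homotopic (qV'.map f.continuous) := Quotient.exact key
  have hX := hU.map ⟨(Subtype.val : ↥U → X), continuous_subtype_val⟩
  exact homotopic_of_pointwise hX (fun s => rfl) (fun s => rfl)
theorem joined_iff_homotopic {p : X} (γ η : Path p p) :
    Joined γ η ↔ γ.Homotopic η := by
  constructor
  · rintro ⟨P⟩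
    exact ⟨{ toFun := fun st => P st.1 st.2
             continuous_toFun := Path.continuous_uncurry_iff.mpr P.continuous
             map_zero_left := fun t => by simp [P.source]
             map_one_left := fun t => by simp [P.target]
             prop' := fun t x hx => by
               rcases hx with rfl | hx
               · simp [Path.source]
               · rcases hx with rfl
                 simp [Path.target] }⟩
  · rintro ⟨H⟩
    refine ⟨⟨⟨fun s => ⟨⟨fun t => H (s, t), by fun_prop⟩, ?_, ?_⟩, ?_⟩, ?_, ?_⟩⟩
    · exact (H.prop' s 0 (Set.mem_insert _ _)).trans γ.source
    · exact (H.prop' s 1 (Set.mem_insert_of_mem _ rfl)).trans γ.target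
    · exact Path.continuous_uncurry_iff.mp H.continuous
    · exact Path.ext (funext fun t => H.apply_zero t)
    · exact Path.ext (funext fun t => H.apply_one t)

theorem isOpen_mapsTo_path {p : X} {K : Set I} {U : Set X} (hK : IsCompact K) (hU : IsOpen U) :
    IsOpen {η : Path p p | Set.MapsTo ⇑η K U} :=
  (ContinuousMap.isOpen_setOf_mapsTo hK hU).preimage
    (continuous_induced_dom : Continuous ((↑) : Path p p → C(I, X)))
theorem exists_open_class_nbhd (hX : LocallyContractible X) {p : X} (γ : Path p p) :
    ∃ N : Set (Path p p), IsOpen N ∧ γ ∈ N ∧ ∀ η ∈ N, γ.Homotopic η := by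
  classical
  -- contractible-in-X neighborhoods around every point
  choose V hVnhds hVuniv cc hcc using fun x : X => hX x Set.univ Filter.univ_mem
  have hcover : (Set.univ : Set I) ⊆ ⋃ t : I, γ ⁻¹' interior (V (γ t)) := fun t _ =>
    Set.mem_iUnion.2 ⟨t, mem_interior_iff_mem_nhds.2 (hVnhds (γ t))⟩
  obtain ⟨δ, hδ, hball⟩ := lebesgue_number_lemma_of_metric isCompact_univ
    (fun t => isOpen_interior.preimage γ.continuous) hcover
  obtain ⟨n, hn⟩ := exists_nat_one_div_lt hδ
  set m : ℝ := (n : ℝ) + 1 with hm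
  have hm0 : (0 : ℝ) < m := by positivity
  -- the subdivision nodes
  set tk : ℕ → I := fun k => Set.projIcc 0 1 zero_le_one (k / m) with htkdef
  have hcoe : ∀ k : ℕ, k ≤ n + 1 → ((tk k : I) : ℝ) = k / m := by
    intro k hk
    refine congrArg Subtype.val (Set.projIcc_of_mem zero_le_one ⟨by positivity, ?_⟩)
    rw [div_le_one hm0, hm]
    exact_mod_cast hk
  have htk0 : tk 0 = 0 := by
    apply Subtype.ext
    rw [hcoe 0 (Nat.zero_le _)]
    norm_num
  have htk1 : tk (n + 1) = 1 := by
    apply Subtype.ext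
    rw [hcoe (n + 1) le_rfl]
    rw [hm]
    push_cast
    rw [div_self (by positivity)]
  have htk_mono : Monotone tk := by
    intro i j hij
    apply Set.monotone_projIcc
    gcongr
  have htk_lip : ∀ k : ℕ, ((tk (k + 1) : I) : ℝ) - tk k ≤ 1 / m := by
    intro k
    have h1 := (LipschitzWith.projIcc (zero_le_one (α := ℝ))).dist_le_mul
      ((k + 1 : ℕ) / m) ((k : ℕ) / m)
    rw [NNReal.coe_one, one_mul] at h1
    have h2 : dist ((k + 1 : ℕ) / m : ℝ) ((k : ℕ) / m) = 1 / m := by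
      have e : ((k + 1 : ℕ) : ℝ) / m - ((k : ℕ) : ℝ) / m = 1 / m := by
        push_cast
        rw [div_sub_div_same]
        ring_nf
      rw [Real.dist_eq, e, abs_of_nonneg (by positivity)]
    have h3 : ((tk (k + 1) : I) : ℝ) - tk k ≤ dist (tk (k + 1)) (tk k) := le_abs_self _
    calc ((tk (k + 1) : I) : ℝ) - tk k ≤ dist (tk (k + 1)) (tk k) := h3
      _ ≤ dist ((k + 1 : ℕ) / m : ℝ) ((k : ℕ) / m) := by
          simpa [Subtype.dist_eq, tk] using h1
      _ = 1 / m := h2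
  -- choice of a contractible set for each segment
  have hseg : ∀ k : ℕ, ∃ t : I, Set.Icc (tk k) (tk (k + 1)) ⊆ γ ⁻¹' interior (V (γ t)) := by
    intro k
    obtain ⟨t, ht⟩ := hball (tk k) trivial
    refine ⟨t, fun x hx => ht ?_⟩
    rw [Metric.mem_ball]
    have hd : dist x (tk k) = |(x : ℝ) - tk k| := rfl
    rw [hd, abs_of_nonneg (by exact sub_nonneg.2 hx.1)]
    calc ((x : I) : ℝ) - tk k ≤ ((tk (k + 1) : I) : ℝ) - tk k := by
          have := hx.2; linarith [Subtype.coe_le_coe.2 hx.2]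
      _ ≤ 1 / m := htk_lip k
      _ < δ := hn
  choose st hst using hseg
  set O : ℕ → Set X := fun k => interior (V (γ (st k))) with hO
  have hOopen : ∀ k, IsOpen (O k) := fun k => isOpen_interior
  have hγO : ∀ k : ℕ, ∀ x ∈ Set.Icc (tk k) (tk (k + 1)), γ x ∈ O k := fun k x hx => hst k hx
  have hγnode : ∀ k : ℕ, γ (tk (k + 1)) ∈ O k ∩ O (k + 1) :=
    fun k => ⟨hγO k _ ⟨htk_mono (Nat.le_succ k), le_rfl⟩,
      hγO (k + 1) _ ⟨le_rfl, htk_mono (Nat.le_succ (k + 1))⟩⟩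
  -- node neighborhoods with contractions into the intersections
  have hnode : ∀ k : ℕ, ∃ W ∈ 𝓝 (γ (tk (k + 1))), ∃ hWsub : W ⊆ O k ∩ O (k + 1),
      ∃ c : ↥(O k ∩ O (k + 1)),
      (⟨Set.inclusion hWsub, continuous_inclusion hWsub⟩ :
        C(↥W, ↥(O k ∩ O (k + 1)))).Homotopic (ContinuousMap.const ↥W c) :=
    fun k => hX _ _ (((hOopen k).inter (hOopen (k + 1))).mem_nhds (hγnode k))
  choose W hWnhds hWsub cnode hcnode using hnode
  -- the neighborhood in the loop space
  refine ⟨(⋂ k ∈ Set.Iic n, {η : Path p p | Set.MapsTo ⇑η (Set.Icc (tk k) (tk (k + 1))) (O k)})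
    ∩ ⋂ k ∈ Set.Iio n, {η : Path p p | η (tk (k + 1)) ∈ interior (W k)}, ?_, ?_, ?_⟩
  · apply IsOpen.inter
    · exact (Set.finite_Iic n).isOpen_biInter
        (fun k _ => isOpen_mapsTo_path (isClosed_Icc.isCompact) (hOopen k))
    · exact (Set.finite_Iio n).isOpen_biInter (fun k _ =>
        isOpen_interior.preimage (continuous_eval_const (tk (k + 1))))
  · constructor
    · exact Set.mem_iInter₂.2 fun k _ x hx => hγO k x hx
    · exact Set.mem_iInter₂.2 fun k _ =>
        mem_interior_iff_mem_nhds.2 (hWnhds k)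
  · rintro η ⟨hη1, hη2⟩
    rw [Set.mem_iInter₂] at hη1
    rw [Set.mem_iInter₂] at hη2
        -- prefix paths and segment paths
    let Pr : ∀ (q : Path p p) (k : ℕ), Path p (q (tk k)) := fun q k =>
      ((linI 0 (tk k)).map q.continuous).cast q.source.symm rfl
    let sg : ∀ (q : Path p p) (k : ℕ), Path (q (tk k)) (q (tk (k + 1))) := fun q k =>
      (linI (tk k) (tk (k + 1))).map q.continuous
    have hsgrange : ∀ (q : Path p p) (k : ℕ),
        Set.range ⇑(sg q k) ⊆ ⇑q '' Set.Icc (tk k) (tk (k + 1)) := by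
      intro q k
      show Set.range ⇑((linI (tk k) (tk (k + 1))).map q.continuous) ⊆ _
      rw [Path.map_coe, Set.range_comp]
      exact Set.image_mono (linI_range (htk_mono (Nat.le_succ k)))
    have hγOs : ∀ k : ℕ, ⇑γ '' Set.Icc (tk k) (tk (k + 1)) ⊆ O k :=
      fun k => Set.image_subset_iff.2 (hst k)
    have hηOs : ∀ k ≤ n, ⇑η '' Set.Icc (tk k) (tk (k + 1)) ⊆ O k :=
      fun k hk => (hη1 k hk).image_subset
    have hOV : ∀ k : ℕ, O k ⊆ V (γ (st k)) := fun k => interior_subset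
    -- compatibility of prefix paths with concatenation
    have hE1 : ∀ (q : Path p p) (k : ℕ), (Pr q (k + 1)).Homotopic ((Pr q k).trans (sg q k)) := by
      intro q k
      refine homotopic_of_via q.toContinuousMap (linI 0 (tk (k + 1)))
        ((linI 0 (tk k)).trans (linI (tk k) (tk (k + 1)))) (fun s => rfl) ?_
      exact trans_pointwise (F := ⇑q) (fun s => rfl) (fun s => rfl)
    -- the squares
    have square : ∀ k ≤ n, ∀ (a : Path (γ (tk k)) (η (tk k)))
        (a' : Path (γ (tk (k + 1))) (η (tk (k + 1)))),
        Set.range ⇑a ⊆ O k → Set.range ⇑a' ⊆ O k →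
        ((sg γ k).trans a').Homotopic (a.trans (sg η k)) := by
      intro k hk a a' ha ha'
      apply core (hVuniv (γ (st k))) (cc (γ (st k))) (hcc (γ (st k)))
      · rw [Path.trans_range]
        exact Set.union_subset ((hsgrange γ k).trans ((hγOs k).trans (hOV k)))
          (ha'.trans (hOV k))
      · rw [Path.trans_range]
        exact Set.union_subset (ha.trans (hOV k))
          ((hsgrange η k).trans ((hηOs k hk).trans (hOV k)))
    -- the inductive gluing step
    have chainstep : ∀ (k : ℕ) (a : Path (γ (tk k)) (η (tk k)))
        (a' : Path (γ (tk (k + 1))) (η (tk (k + 1)))),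
        ((sg γ k).trans a').Homotopic (a.trans (sg η k)) →
        ((Pr γ k).trans a).Homotopic (Pr η k) →
        ((Pr γ (k + 1)).trans a').Homotopic (Pr η (k + 1)) := by
      intro k a a' hsq hhom
      have c1 := (hE1 γ k).hcomp (Path.Homotopic.refl a')
      have c2 : (((Pr γ k).trans (sg γ k)).trans a').Homotopic
          ((Pr γ k).trans ((sg γ k).trans a')) := ⟨Path.Homotopy.transAssoc _ _ _⟩
      have c3 := (Path.Homotopic.refl (Pr γ k)).hcomp hsq
      have c4 : ((Pr γ k).trans (a.trans (sg η k))).Homotopic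
          (((Pr γ k).trans a).trans (sg η k)) :=
        Path.Homotopic.symm ⟨Path.Homotopy.transAssoc _ _ _⟩
      have c5 := hhom.hcomp (Path.Homotopic.refl (sg η k))
      exact ((((c1.trans c2).trans c3).trans c4).trans c5).trans (hE1 η k).symm
    -- connecting paths at the interior nodes
    have hγW : ∀ k : ℕ, γ (tk (k + 1)) ∈ W k := fun k => mem_of_mem_nhds (hWnhds k)
    have hAex : ∀ k < n, ∃ a : Path (γ (tk (k + 1))) (η (tk (k + 1))),
        Set.range ⇑a ⊆ O k ∩ O (k + 1) := by
      intro k hk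
      have H : _ := (hcnode k).some
      let g1 : Path (γ (tk (k + 1))) ((cnode k : X)) :=
        (H.evalAt ⟨γ (tk (k + 1)), hγW k⟩).map continuous_subtype_val
      let g2 : Path (η (tk (k + 1))) ((cnode k : X)) :=
        (H.evalAt ⟨η (tk (k + 1)), interior_subset (hη2 k hk)⟩).map continuous_subtype_val
      have hr : ∀ y (hy : y ∈ W k), Set.range
          ⇑((H.evalAt ⟨y, hy⟩).map continuous_subtype_val) ⊆ O k ∩ O (k + 1) := by
        intro y hy
        rw [Path.map_coe, Set.range_comp]
        intro x hx
        obtain ⟨u, _, rfl⟩ := hx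
        exact u.2
      refine ⟨g1.trans g2.symm, ?_⟩
      rw [Path.trans_range]
      refine Set.union_subset (hr _ _) ?_
      rw [Path.symm_range]
      exact hr _ _
    -- the main induction along the subdivision
    have main : ∀ k ≤ n, ∃ a : Path (γ (tk k)) (η (tk k)),
        Set.range ⇑a ⊆ O k ∧ ((Pr γ k).trans a).Homotopic (Pr η k) := by
      intro k
      induction k with
      | zero =>
        intro _
        have e0γ : γ (tk 0) = p := by rw [htk0]; exact γ.source
        have e0η : η (tk 0) = p := by rw [htk0]; exact η.source
        have hp0 : p ∈ O 0 := by
          rw [← e0γ]; exact hγO 0 _ ⟨le_rfl, htk_mono (Nat.le_succ 0)⟩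
        have hlin0 : ∀ (q : Path p p) (s : I), q (linI 0 (tk 0) s) = p := by
          intro q s
          have hv : linI 0 (tk 0) s = 0 := by
            apply Subtype.ext
            have h0 : ((tk 0 : I) : ℝ) = 0 := congrArg Subtype.val htk0
            show (1 - (s : ℝ)) * ((0 : I) : ℝ) + s * ((tk 0 : I) : ℝ) = ((0 : I) : ℝ)
            rw [h0]
            norm_num
          rw [hv]
          exact q.source
        refine ⟨(Path.refl p).cast e0γ e0η, ?_, ?_⟩
        · rintro x ⟨s, rfl⟩
          exact hp0
        · refine homotopic_of_via (ContinuousMap.const I p) (Path.refl 0) (Path.refl 0) ?_ ?_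
          · intro s
            rw [Path.trans_apply]
            split_ifs
            · exact hlin0 γ _
            · rfl
          · intro s
            exact hlin0 η _
      | succ k ih =>
        intro hk1
        obtain ⟨a, haO, hhom⟩ := ih (Nat.le_of_succ_le hk1)
        obtain ⟨a', ha'⟩ := hAex k (Nat.lt_of_succ_le hk1)
        refine ⟨a', ha'.trans Set.inter_subset_right, ?_⟩
        exact chainstep k a a'
          (square k (Nat.le_of_succ_le hk1) a a' haO (ha'.trans Set.inter_subset_left)) hhom
    -- the last square and conclusion
    obtain ⟨a, haO, hhom⟩ := main n le_rfl
    have enγ : γ (tk (n + 1)) = p := by rw [htk1]; exact γ.target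
    have enη : η (tk (n + 1)) = p := by rw [htk1]; exact η.target
    have hpOn : p ∈ O n := by
      rw [← enγ]; exact hγO n _ ⟨htk_mono (Nat.le_succ n), le_rfl⟩
    have hfin : ((Pr γ (n + 1)).trans ((Path.refl p).cast enγ enη)).Homotopic (Pr η (n + 1)) := by
      refine chainstep n a ((Path.refl p).cast enγ enη) ?_ hhom
      refine square n le_rfl a ((Path.refl p).cast enγ enη) haO ?_
      rintro x ⟨s, rfl⟩
      exact hpOn
    -- transfer back to the loops themselves
    let lin1 : Path (0 : I) (1 : I) :=
      ⟨(linI 0 (tk (n + 1))).toContinuousMap, (linI 0 (tk (n + 1))).source',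
        (linI 0 (tk (n + 1))).target'.trans htk1⟩
    let idp : Path (0 : I) (1 : I) := ⟨⟨id, continuous_id⟩, rfl, rfl⟩
    let X1 : Path p p := ((Pr γ (n + 1)).trans ((Path.refl p).cast enγ enη)).cast rfl enη.symm
    let X2 : Path p p := (Pr η (n + 1)).cast rfl enη.symm
    have s1 : γ.Homotopic X1 := by
      refine homotopic_of_via γ.toContinuousMap idp (lin1.trans (Path.refl 1))
        (fun s => rfl) ?_
      intro s
      show ((Pr γ (n + 1)).trans ((Path.refl p).cast enγ enη)) s = γ ((lin1.trans (Path.refl 1)) s)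
      exact trans_pointwise (F := ⇑γ) (fun s => rfl) (fun s => γ.target.symm) s
    have s2 : X1.Homotopic X2 := homotopic_of_pointwise hfin (fun s => rfl) (fun s => rfl)
    have s3 : X2.Homotopic η :=
      homotopic_of_via η.toContinuousMap lin1 idp (fun s => rfl) (fun s => rfl)
    exact (s1.trans s2).trans s3

end HelperSection

/-- if `X` is locally contractible then `π₁(X,p)` is discrete for
every basepoint `p`. -/
theorem discrete_pi1_of_locallyContractible
    (X : Type*) [TopologicalSpace X] (h : LocallyContractible X) (p : X) :
    DiscreteTopology (piTop X p) := by
  apply discreteTopology_iff_isOpen_singleton.mpr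
  intro x
  obtain ⟨γ, rfl⟩ := Quotient.exists_rep x
  show IsOpen (Quotient.mk (pathSetoid (Path p p)) ⁻¹' {Quotient.mk (pathSetoid (Path p p)) γ})
  have hset : Quotient.mk (pathSetoid (Path p p)) ⁻¹' {Quotient.mk (pathSetoid (Path p p)) γ}
      = {η : Path p p | γ.Homotopic η} := by
    ext η
    simp only [Set.mem_preimage, Set.mem_singleton_iff, Set.mem_setOf_eq, Quotient.eq]
    exact ⟨fun hj => (joined_iff_homotopic γ η).mp (Joined.symm hj),
      fun hh => Joined.symm ((joined_iff_homotopic γ η).mpr hh)⟩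
  rw [hset]
  rw [isOpen_iff_forall_mem_open]
  intro η₀ hη₀
  obtain ⟨N, hNopen, hNmem, hN⟩ := exists_open_class_nbhd h η₀
  exact ⟨N, fun η hη => Path.Homotopic.trans hη₀ (hN η hη), hNopen, hNmem⟩
end
end

section
/- If π₁(X,p) and π₁(Y,q) with their quotient topologies are not homeomorphic as topological spaces, then X and Y do not have the same homotopy type (via basepoint-ignoring homotopy equivalences, assuming X and Y path connected). -/
open unitInterval Topology

noncomputable section

namespace Pi1Aux

open ContinuousMap

variable {Z : Type*} [TopologicalSpace Z]

/-- Homotopic paths are joined in the path space. -/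
lemma joined_of_homotopic {a b : Z} {p q : Path a b} (h : p.Homotopic q) : Joined p q := by
  obtain ⟨F⟩ := h
  refine ⟨⟨⟨F.eval, ?_⟩, F.eval_zero, F.eval_one⟩⟩
  apply Path.continuous_uncurry_iff.mp
  have : (Function.uncurry fun t s => F.eval t s) = fun q : I × I => F q := by
    funext q; rfl
  rw [show (↿F.eval) = fun q : I × I => F q from this]
  exact F.continuous

/-- Conjugation by a path, as a continuous map on loop spaces. -/
def conjC {a b : Z} (γ : Path a b) : C(Path b b, Path a a) where
  toFun δ := (γ.trans δ).trans γ.symm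
  continuous_toFun := by
    have h1 : Continuous fun δ : Path b b => γ.trans δ :=
      Path.continuous_trans.comp (continuous_const.prodMk continuous_id)
    exact Path.continuous_trans.comp (h1.prodMk continuous_const)

/-- The map on loop spaces induced by a continuous map. -/
def loopC {W : Type*} [TopologicalSpace W] (f : C(Z, W)) (z : Z) :
    C(Path z z, Path (f z) (f z)) where
  toFun δ := δ.map f.continuous
  continuous_toFun := by
    apply Path.continuous_uncurry_iff.mp
    exact f.continuous.comp continuous_eval

/-- Descent of a continuous map on loop spaces to the fundamental groups. -/
def piC {W : Type*} [TopologicalSpace W] {a : Z} {b : W} (F : C(Path a a, Path b b)) :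
    C(piTop Z a, piTop W b) where
  toFun := Quotient.map F (fun x y h => by
    obtain ⟨P⟩ := (h : Joined x y)
    exact (⟨P.map F.continuous⟩ : Joined (F x) (F y)))
  continuous_toFun := by
    show Continuous (Quotient.lift _ _)
    exact Continuous.quotient_lift (continuous_quot_mk.comp F.continuous) _

lemma conj_conj_homotopic {a b : Z} (γ : Path a b) (δ : Path b b) :
    ((γ.symm.trans ((γ.trans δ).trans γ.symm)).trans γ).Homotopic δ := by
  have assoc : ∀ {w x y z : Z} (p : Path w x) (q : Path x y) (r : Path y z),
      ((p.trans q).trans r).Homotopic (p.trans (q.trans r)) :=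
    fun p q r => ⟨Path.Homotopy.transAssoc p q r⟩
  have st : ∀ {x y : Z} (p : Path x y), (p.symm.trans p).Homotopic (Path.refl y) :=
    fun p => ⟨(Path.Homotopy.reflSymmTrans p).symm⟩
  have tr : ∀ {x y : Z} (p : Path x y), (p.trans (Path.refl y)).Homotopic p :=
    fun p => ⟨Path.Homotopy.transRefl p⟩
  have rt : ∀ {x y : Z} (p : Path x y), ((Path.refl x).trans p).Homotopic p :=
    fun p => ⟨Path.Homotopy.reflTrans p⟩
  have h1 : (((γ.trans δ).trans γ.symm).trans γ).Homotopic (γ.trans δ) :=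
    (assoc (γ.trans δ) γ.symm γ).trans
      ((Path.Homotopic.hcomp (Path.Homotopic.refl (γ.trans δ)) (st γ)).trans (tr (γ.trans δ)))
  have h2 : ((γ.symm.trans ((γ.trans δ).trans γ.symm)).trans γ).Homotopic
      (γ.symm.trans (((γ.trans δ).trans γ.symm).trans γ)) := assoc _ _ _
  have h3 : (γ.symm.trans (((γ.trans δ).trans γ.symm).trans γ)).Homotopic
      (γ.symm.trans (γ.trans δ)) := Path.Homotopic.hcomp (Path.Homotopic.refl γ.symm) h1
  have h4 : (γ.symm.trans (γ.trans δ)).Homotopic ((γ.symm.trans γ).trans δ) :=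
    (assoc γ.symm γ δ).symm
  have h5 : ((γ.symm.trans γ).trans δ).Homotopic ((Path.refl b).trans δ) :=
    Path.Homotopic.hcomp (st γ) (Path.Homotopic.refl δ)
  exact h2.trans (h3.trans (h4.trans (h5.trans (rt δ))))

attribute [local instance] Path.Homotopic.setoid

open CategoryTheory FundamentalGroupoid in
/-- Naturality: a homotopy `H : f ∼ g` conjugates the image of a loop. -/
lemma homotopy_conj {Z : Type u} [TopologicalSpace Z] {f g : C(Z, Z)}
    (H : ContinuousMap.Homotopy f g) (z : Z) (δ : Path z z) :
    (δ.map f.continuous).Homotopic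
      (((H.evalAt z).trans (δ.map g.continuous)).trans (H.evalAt z).symm) := by
  let X : TopCat.{u} := TopCat.of Z
  let p : (fromTop (X := X) z) ⟶ (fromTop z) := ⟦δ⟧
  let f' : C(X, X) := f
  let g' : C(X, X) := g
  let E : fromTop (X := X) (f z) ⟶ fromTop (X := X) (g z) := ⟦H.evalAt z⟧
  let Ff : fromTop (X := X) (f z) ⟶ fromTop (X := X) (f z) := ⟦δ.map f.continuous⟧
  let Gg : fromTop (X := X) (g z) ⟶ fromTop (X := X) (g z) := ⟦δ.map g.continuous⟧
  have keys := @ContinuousMap.Homotopy.eq_diag_path X X f' g' H z z p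
  have key : Ff ≫ E = E ≫ Gg := by
    have hf : (πₘ (TopCat.ofHom f')).map p = Ff := by
      rfl
    have hg : (πₘ (TopCat.ofHom g')).map p = Gg := by
      rfl
    rw [← hf, ← hg]
    exact keys.1.trans keys.2.symm
  apply Quotient.exact (s := Path.Homotopic.setoid _ _)
  show Ff = (⟦((H.evalAt z).trans (δ.map g.continuous)).trans (H.evalAt z).symm⟧ :
      fromTop (X := X) (f z) ⟶ fromTop (X := X) (f z))
  refine Eq.trans (b := (E ≫ Gg) ≫ Groupoid.inv E) ?_ ?_
  calc Ff = (Ff ≫ E) ≫ Groupoid.inv E := by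
        rw [Category.assoc, Groupoid.comp_inv, Category.comp_id]
    _ = (E ≫ Gg) ≫ Groupoid.inv E := by rw [key]
  rfl

/-- Conjugation by a path, as a homeomorphism of fundamental groups. -/
def conjHomeo {a b : Z} (γ : Path a b) : piTop Z b ≃ₜ piTop Z a where
  toFun := piC (conjC γ)
  invFun := piC (conjC γ.symm)
  left_inv x := by
    refine Quotient.inductionOn x fun δ => ?_
    refine Quotient.sound (joined_of_homotopic ?_)
    show ((γ.symm.trans ((γ.trans δ).trans γ.symm)).trans γ.symm.symm).Homotopic δ
    simpa using conj_conj_homotopic γ δ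
  right_inv x := by
    refine Quotient.inductionOn x fun δ => ?_
    refine Quotient.sound (joined_of_homotopic ?_)
    show ((γ.trans ((γ.symm.trans δ).trans γ.symm.symm)).trans γ.symm).Homotopic δ
    simpa using conj_conj_homotopic γ.symm δ
  continuous_toFun := (piC (conjC γ)).continuous
  continuous_invFun := (piC (conjC γ.symm)).continuous

end Pi1Aux

open Pi1Aux ContinuousMap in
/-- for path connected `X`, `Y`, if the topological fundamental
groups `π₁(X,p)` and `π₁(Y,q)` are not homeomorphic, then `X` and `Y` do not
have the same homotopy type. -/
theorem not_homotopy_equivalent_of_pi1_not_homeomorphic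
    (X Y : Type*) [TopologicalSpace X] [TopologicalSpace Y]
    [PathConnectedSpace X] [PathConnectedSpace Y] (p : X) (q : Y)
    (h : IsEmpty (piTop X p ≃ₜ piTop Y q)) :
    IsEmpty (ContinuousMap.HomotopyEquiv X Y) := by
  constructor
  intro e
  apply h.false
  obtain ⟨f, g, hgf, hfg⟩ := e
  have Hgf : ContinuousMap.Homotopy (g.comp f) (ContinuousMap.id X) := hgf.some
  have Hfg : ContinuousMap.Homotopy (f.comp g) (ContinuousMap.id Y) := hfg.some
  let α : Path (g (f p)) p := Hgf.evalAt p
  let β : Path (f (g (f p))) (f p) := Hfg.evalAt (f p)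
  let F₁ : C(piTop X p, piTop Y (f p)) := piC (loopC f p)
  let G : C(piTop Y (f p), piTop X (g (f p))) := piC (loopC g (f p))
  let F₂ : C(piTop X (g (f p)), piTop Y (f (g (f p)))) := piC (loopC f (g (f p)))
  let A : piTop X p ≃ₜ piTop X (g (f p)) := conjHomeo α
  let B : piTop Y (f p) ≃ₜ piTop Y (f (g (f p))) := conjHomeo β
  have hGF : ∀ x, G (F₁ x) = A x := by
    refine fun x => Quotient.inductionOn x fun δ => ?_
    exact Quotient.sound (joined_of_homotopic (homotopy_conj Hgf p δ))
  have hFG : ∀ y, F₂ (G y) = B y := by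
    refine fun y => Quotient.inductionOn y fun δ => ?_
    exact Quotient.sound (joined_of_homotopic (homotopy_conj Hfg (f p) δ))
  -- `G` is a homeomorphism
  let R : piTop X (g (f p)) → piTop Y (f p) := fun x => F₁ (A.symm x)
  let L : piTop X (g (f p)) → piTop Y (f p) := fun x => B.symm (F₂ x)
  have hR : ∀ x, G (R x) = x := fun x => by
    show G (F₁ (A.symm x)) = x
    rw [hGF]; exact A.apply_symm_apply x
  have hL : ∀ y, L (G y) = y := fun y => by
    show B.symm (F₂ (G y)) = y
    rw [hFG]; exact B.symm_apply_apply y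
  have hLR : ∀ y, R (G y) = y := fun y => by
    have h1 : G (R (G y)) = G y := hR (G y)
    calc R (G y) = L (G (R (G y))) := (hL (R (G y))).symm
      _ = L (G y) := by rw [h1]
      _ = y := hL y
  let Ghomeo : piTop Y (f p) ≃ₜ piTop X (g (f p)) :=
    { toFun := G
      invFun := R
      left_inv := hLR
      right_inv := hR
      continuous_toFun := G.continuous
      continuous_invFun := F₁.continuous.comp A.symm.continuous }
  let C : piTop Y (f p) ≃ₜ piTop Y q := conjHomeo (PathConnectedSpace.somePath q (f p))
  exact A.trans (Ghomeo.symm.trans C)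
end
end

section
/- For n ≥ 2 let C_n ⊂ ℝ² be the boundary of the triangle with vertices (0,0), (1/n, 1), and (1/n,1) + 10^{-10n}·(n,−1), and let X = ⋃_{n≥2} C_n. Then X is path connected and locally contractible. -/
open unitInterval Topology

noncomputable section

/-- The common basepoint `p = (0,0)`. -/
def pp : ℝ × ℝ := (0, 0)

/-- The apex `(1/n, 1)` of the `n`-th triangle. -/
def apex (n : ℕ) : ℝ × ℝ := (1 / (n : ℝ), 1)

/-- The third vertex `(1/n,1) + 10^{-10n}·(n,-1)` of the `n`-th triangle. -/
def apex' (n : ℕ) : ℝ × ℝ := apex n + (((10 : ℝ) ^ (10 * n))⁻¹) • ((n : ℝ), -1)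

/-- The boundary of the `n`-th triangle, i.e. the union of its three edges. -/
def Cset (n : ℕ) : Set (ℝ × ℝ) :=
  segment ℝ pp (apex n) ∪ segment ℝ (apex n) (apex' n) ∪ segment ℝ (apex' n) pp

/-- The bouquet `X = ⋃_{n ≥ 2} C_n`. -/
def Xset : Set (ℝ × ℝ) := ⋃ n ∈ {n : ℕ | 2 ≤ n}, Cset n

/-- The segment `α` from `(0,0)` to `(0,1)`. -/
def alphaSet : Set (ℝ × ℝ) := segment ℝ (0, 0) (0, 1)

/-- The compactification `Y = X ∪ α`. -/
def Yset : Set (ℝ × ℝ) := Xset ∪ alphaSet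

lemma pp_mem_C (n : ℕ) : pp ∈ Cset n := Or.inl (Or.inl (left_mem_segment ℝ _ _))

lemma pp_mem_X : pp ∈ Xset :=
  Set.mem_biUnion (by norm_num : (2 : ℕ) ∈ {n : ℕ | 2 ≤ n}) (pp_mem_C 2)

lemma X_sub_Y : Xset ⊆ Yset := Set.subset_union_left

lemma pp_mem_Y : pp ∈ Yset := X_sub_Y pp_mem_X

/-- The basepoint of `X`. -/
def pX : ↥Xset := ⟨pp, pp_mem_X⟩

/-- The basepoint of `Y`. -/
def pY : ↥Yset := ⟨pp, pp_mem_Y⟩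

/-- The inclusion `X ↪ Y` as a continuous map between subspaces. -/
def jXY : C(↥Xset, ↥Yset) := ⟨Set.inclusion X_sub_Y, continuous_inclusion X_sub_Y⟩

lemma jXY_pX : jXY pX = pY := rfl

-- abbreviation for the small parameter
def dd (n : ℕ) : ℝ := ((10 : ℝ) ^ (10 * n))⁻¹

lemma dd_pos (n : ℕ) : 0 < dd n := by rw [dd]; positivity

lemma ten_pow_lt (m : ℕ) : (m : ℝ) < 10 ^ m := by
  exact_mod_cast (Nat.lt_pow_self (by norm_num) : m < 10 ^ m)

lemma ten_le_pow {m : ℕ} (hm : 1 ≤ m) : (10 : ℝ) ≤ 10 ^ m := by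
  calc (10:ℝ) = 10 ^ 1 := by norm_num
  _ ≤ 10 ^ m := by exact pow_le_pow_right₀ (by norm_num) hm

lemma pow_ten_mul (m : ℕ) : (10:ℝ) ^ (10 * m) = ((10:ℝ) ^ m) ^ 10 := by
  rw [← pow_mul, Nat.mul_comm]

lemma dd_le_half {n : ℕ} (hn : 1 ≤ n) : dd n ≤ 1/2 := by
  rw [dd, pow_ten_mul]
  have h10 : (10:ℝ) ≤ 10 ^ n := ten_le_pow hn
  have h2 : (2:ℝ) ≤ ((10:ℝ)^n)^10 := by
    calc (2:ℝ) ≤ (10:ℝ)^n := by linarith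
    _ ≤ ((10:ℝ)^n)^10 := le_self_pow₀ (by linarith) (by norm_num)
  rw [inv_le_comm₀ (by positivity) (by norm_num)]
  linarith

lemma apex'_fst (n : ℕ) : (apex' n).1 = 1/(n:ℝ) + dd n * n := rfl
lemma apex'_snd (n : ℕ) : (apex' n).2 = 1 - dd n := by
  show (1:ℝ) + dd n * (-1) = 1 - dd n; ring

lemma seg_lin {α β c : ℝ} {a b : ℝ × ℝ}
    (ha : α * a.1 + β * a.2 ≤ c) (hb : α * b.1 + β * b.2 ≤ c) :
    ∀ x ∈ segment ℝ a b, α * x.1 + β * x.2 ≤ c := by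
  rintro x ⟨u, v, hu, hv, huv, rfl⟩
  have h1 : (u • a + v • b).1 = u * a.1 + v * b.1 := rfl
  have h2 : (u • a + v • b).2 = u * a.2 + v * b.2 := rfl
  rw [h1, h2]
  have hc : u * c + v * c = c := by rw [← add_mul, huv, one_mul]
  nlinarith [mul_le_mul_of_nonneg_left ha hu, mul_le_mul_of_nonneg_left hb hv]

lemma C_le {n : ℕ} {α β c : ℝ}
    (h1 : 0 ≤ c) (h2 : α * (apex n).1 + β * (apex n).2 ≤ c)
    (h3 : α * (apex' n).1 + β * (apex' n).2 ≤ c) :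
    ∀ x ∈ Cset n, α * x.1 + β * x.2 ≤ c := by
  have hpp : α * pp.1 + β * pp.2 ≤ c := by simp [pp]; linarith
  rintro x ((h | h) | h)
  · exact seg_lin hpp h2 x h
  · exact seg_lin h2 h3 x h
  · exact seg_lin h3 hpp x h

lemma C_bounds {n : ℕ} (hn : 1 ≤ n) {x : ℝ × ℝ} (hx : x ∈ Cset n) :
    0 ≤ x.1 ∧ 0 ≤ x.2 ∧ x.2 ≤ 1 ∧ x.2 ≤ n * x.1 ∧
      (1 - dd n) * x.1 ≤ (1/(n:ℝ) + n * dd n) * x.2 := by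
  have hN : (1:ℝ) ≤ n := by exact_mod_cast hn
  have hd := dd_pos n
  have ha1 : (apex n).1 = 1/(n:ℝ) := rfl
  have ha2 : (apex n).2 = (1:ℝ) := rfl
  have hb1 := apex'_fst n
  have hb2 := apex'_snd n
  have hn0 : (0:ℝ) < n := by linarith
  have hi0 : (0:ℝ) < 1/(n:ℝ) := by positivity
  have hp : (0:ℝ) ≤ dd n * n * n := by positivity
  have hq : (0:ℝ) ≤ dd n * n := by positivity
  have hinv : (n:ℝ) * (1/(n:ℝ)) = 1 := by field_simp
  have hdh : dd n ≤ 1/2 := dd_le_half hn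
  refine ⟨?_, ?_, ?_, ?_, ?_⟩
  · have := C_le (n := n) (α := -1) (β := 0) (c := 0) le_rfl
      (by rw [ha1, ha2]; nlinarith) (by rw [hb1, hb2]; nlinarith [hinv, hp, hq, hi0, hdh]) x hx
    linarith
  · have := C_le (n := n) (α := 0) (β := -1) (c := 0) le_rfl
      (by rw [ha1, ha2]; nlinarith) (by rw [hb1, hb2]; nlinarith [hinv, hp, hq, hi0, hdh]) x hx
    linarith
  · have := C_le (n := n) (α := 0) (β := 1) (c := 1) (by norm_num)
      (by rw [ha1, ha2]; nlinarith) (by rw [hb1, hb2]; nlinarith [hinv, hp, hq, hi0, hdh]) x hx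
    linarith
  · have := C_le (n := n) (α := -(n:ℝ)) (β := 1) (c := 0) le_rfl
      (by rw [ha1, ha2]; nlinarith) (by rw [hb1, hb2]; nlinarith [hinv, hp, hq, hi0, hdh]) x hx
    linarith
  · have := C_le (n := n) (α := 1 - dd n) (β := -(1/(n:ℝ) + n * dd n)) (c := 0) le_rfl
      (by rw [ha1, ha2]; nlinarith) (by rw [hb1, hb2]; nlinarith [hinv, hp, hq, hi0, hdh]) x hx
    linarith

lemma fst_eq_zero_imp {n : ℕ} (hn : 1 ≤ n) {x : ℝ × ℝ} (hx : x ∈ Cset n)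
    (h1 : x.1 = 0) : x = pp := by
  obtain ⟨_, h2, _, h4, _⟩ := C_bounds hn hx
  rw [h1, mul_zero] at h4
  have h5 : x.2 = 0 := le_antisymm h4 h2
  show x = ((0 : ℝ), (0 : ℝ))
  rw [Prod.ext_iff]
  exact ⟨h1, h5⟩

lemma numkey {n m : ℕ} (hnm : n < m) (hm1 : 1 ≤ m) :
    (n : ℝ) * (1/(m:ℝ) + m * dd m) + dd m < 1 := by
  have hmn : (n:ℝ) + 1 ≤ m := by exact_mod_cast hnm
  have hn0 : (0:ℝ) ≤ n := Nat.cast_nonneg n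
  have hm0 : (0:ℝ) < m := by linarith
  have ht : (m:ℝ) < 10 ^ m := ten_pow_lt m
  have ht10 : (10:ℝ) ≤ 10 ^ m := ten_le_pow hm1
  set t : ℝ := (10:ℝ) ^ m with htdef
  have htpos : (0:ℝ) < t := by positivity
  have hD : dd m = (t ^ 10)⁻¹ := by rw [dd, pow_ten_mul]
  have hDpos : 0 < dd m := dd_pos m
  have hkey : ((n:ℝ) * m + 1) * m < t ^ 10 := by
    have hn_le : (n:ℝ) ≤ t := by linarith
    have hm_le : (m:ℝ) ≤ t := le_of_lt ht
    have h1 : (n:ℝ) * m ≤ t * t := mul_le_mul hn_le hm_le (by linarith) htpos.le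
    have h2 : ((n:ℝ) * m + 1) * m ≤ (t * t + 1) * t :=
      mul_le_mul (by linarith) hm_le (by linarith) (by nlinarith)
    have h3 : (t * t + 1) * t ≤ 2 * t ^ 3 := by nlinarith
    have h4 : 2 * t ^ 3 < t ^ 4 := by nlinarith
    have h5 : t ^ 4 ≤ t ^ 10 := pow_le_pow_right₀ (by linarith) (by norm_num)
    linarith
  have step : ((n:ℝ) * m + 1) * m * dd m < 1 := by
    rw [hD]
    rw [← div_eq_mul_inv]
    exact (div_lt_one (by positivity)).mpr hkey
  have hinvm : (m:ℝ) * (1/(m:ℝ)) = 1 := by field_simp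
  nlinarith [step, hinvm, hDpos, mul_pos hm0 hDpos]

lemma C_disj {n m : ℕ} (hn1 : 1 ≤ n) (hnm : n < m) {x : ℝ × ℝ}
    (hxn : x ∈ Cset n) (hxm : x ∈ Cset m) : x = pp := by
  have hm1 : 1 ≤ m := le_trans hn1 (le_of_lt hnm)
  obtain ⟨hx1, hx2, _, hx4, _⟩ := C_bounds hn1 hxn
  obtain ⟨_, _, _, _, hx5⟩ := C_bounds hm1 hxm
  have key := numkey hnm hm1
  have hco : (0:ℝ) ≤ 1/(m:ℝ) + m * dd m := by
    have := dd_pos m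
    have : (0:ℝ) < m := by exact_mod_cast hm1
    positivity
  have h6 : (1/(m:ℝ) + m * dd m) * x.2 ≤ (1/(m:ℝ) + m * dd m) * ((n:ℝ) * x.1) :=
    mul_le_mul_of_nonneg_left hx4 hco
  have hx1le : x.1 ≤ 0 := by nlinarith [dd_pos m]
  exact fst_eq_zero_imp hn1 hxn (le_antisymm hx1le hx1)

lemma C_fst_le {m : ℕ} (hm : 1 ≤ m) {y : ℝ × ℝ} (hy : y ∈ Cset m) : y.1 ≤ 2/(m:ℝ) := by
  obtain ⟨hy1, hy2, hy3, _, hy5⟩ := C_bounds hm hy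
  have hm0 : (0:ℝ) < m := by exact_mod_cast hm
  have ht : (m:ℝ) < 10 ^ m := ten_pow_lt m
  have ht10 : (10:ℝ) ≤ 10 ^ m := ten_le_pow hm
  set t : ℝ := (10:ℝ) ^ m with htdef
  have htpos : (0:ℝ) < t := by positivity
  have hD : dd m = (t ^ 10)⁻¹ := by rw [dd, pow_ten_mul]
  have hDpos : 0 < dd m := dd_pos m
  have hDh : dd m ≤ 1/2 := dd_le_half hm
  have hkey : (m:ℝ)^2 + 2 ≤ t ^ 10 := by
    have h1 : (m:ℝ)^2 ≤ t^2 := by nlinarith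
    have h2 : (2:ℝ) ≤ t^8 := by
      calc (2:ℝ) ≤ t := by linarith
      _ ≤ t^8 := le_self_pow₀ (by linarith) (by norm_num)
    have h3 : t^2 + 2 ≤ t^2 * t^8 := by nlinarith
    have h4 : t^2 * t^8 = t^10 := by ring
    linarith
  have step : ((m:ℝ)^2 + 2) * dd m ≤ 1 := by
    rw [hD, ← div_eq_mul_inv]
    exact (div_le_one (by positivity)).mpr hkey
  have hinvm : (m:ℝ) * (1/(m:ℝ)) = 1 := by field_simp
  -- (1/m + m*D) ≤ (1-D)*(2/m)
  have h2m : (2/(m:ℝ)) * m = 2 := by field_simp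
  have hco' : (1/(m:ℝ) + m * dd m) * m ≤ ((1 - dd m) * (2/(m:ℝ))) * m := by
    nlinarith [step, hinvm, h2m]
  have hco : (1/(m:ℝ) + m * dd m) ≤ (1 - dd m) * (2/(m:ℝ)) :=
    le_of_mul_le_mul_right hco' hm0
  have h6 : (1/(m:ℝ) + m * dd m) * y.2 ≤ (1/(m:ℝ) + m * dd m) * 1 := by
    apply mul_le_mul_of_nonneg_left hy3
    positivity
  have h1D : (0:ℝ) < 1 - dd m := by linarith
  nlinarith [hy5, h6, hco, hDh, h1D]

lemma isCompact_seg (a b : ℝ × ℝ) : IsCompact (segment ℝ a b) := by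
  rw [segment_eq_image]
  exact isCompact_Icc.image (by fun_prop)

lemma Cset_closed (n : ℕ) : IsClosed (Cset n) :=
  (((isCompact_seg _ _).union (isCompact_seg _ _)).union (isCompact_seg _ _)).isClosed

lemma C_sub_X {n : ℕ} (hn : 2 ≤ n) : Cset n ⊆ Xset := Set.subset_biUnion_of_mem hn

lemma mem_X_iff {x : ℝ × ℝ} : x ∈ Xset ↔ ∃ n, 2 ≤ n ∧ x ∈ Cset n := by
  simp [Xset, Set.mem_setOf_eq]

lemma top_edge_snd {n : ℕ} (hn : 1 ≤ n) {y : ℝ × ℝ}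
    (hy : y ∈ segment ℝ (apex n) (apex' n)) : 1/2 ≤ y.2 := by
  have hdh := dd_le_half hn
  have := seg_lin (α := 0) (β := -1) (c := -(1/2))
    (a := apex n) (b := apex' n)
    (by show (0:ℝ) * _ + -1 * 1 ≤ -(1/2); norm_num)
    (by rw [apex'_snd]; norm_num; linarith) y hy
  linarith

lemma avoid_radius (x : ℝ × ℝ) (e : Set (ℝ × ℝ)) (he : IsClosed e) :
    ∃ r > 0, x ∉ e → Metric.ball x r ∩ e = ∅ := by
  by_cases hx : x ∈ e
  · exact ⟨1, one_pos, fun h => absurd hx h⟩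
  · obtain ⟨r, hr, hball⟩ := Metric.isOpen_iff.mp he.isOpen_compl x hx
    refine ⟨r, hr, fun _ => ?_⟩
    rw [Set.eq_empty_iff_forall_notMem]
    rintro y ⟨h1, h2⟩
    exact hball h1 h2

lemma dist_fst_le' (y x : ℝ × ℝ) : dist y.1 x.1 ≤ dist y x := by
  rw [Prod.dist_eq]; exact le_max_left _ _

lemma dist_snd_le' (y x : ℝ × ℝ) : dist y.2 x.2 ≤ dist y x := by
  rw [Prod.dist_eq]; exact le_max_right _ _

lemma edge_case {n : ℕ} (hn2 : 2 ≤ n) {x y : ℝ × ℝ} {r : ℝ} (hr : 0 < r)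
    (e : Set (ℝ × ℝ)) (heC : e ⊆ Cset n) (hconv : Convex ℝ e)
    (hxe : x ∈ e) (hy : y ∈ e) (hyB : y ∈ Metric.ball x r) :
    segment ℝ x y ⊆ Xset ∩ Metric.ball x r := fun z hz =>
  ⟨C_sub_X hn2 (heC (hconv.segment_subset hxe hy hz)),
    (convex_ball x r).segment_subset (Metric.mem_ball_self hr) hyB hz⟩

lemma star_nbhd {x : ℝ × ℝ} (hx : x ∈ Xset) {ε : ℝ} (hε : 0 < ε) :
    ∃ r, 0 < r ∧ r ≤ ε ∧ StarConvex ℝ x (Xset ∩ Metric.ball x r) := by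
  by_cases hxp : x = pp
  · subst hxp
    refine ⟨min ε (1/2), by positivity, min_le_left _ _, ?_⟩
    rw [starConvex_iff_segment_subset]
    rintro y ⟨hyX, hyB⟩
    obtain ⟨n, hn2, hyC⟩ := mem_X_iff.mp hyX
    have hn1 : 1 ≤ n := le_trans one_le_two hn2
    have hseg : segment ℝ pp y ⊆ Cset n := by
      rcases hyC with (h | h) | h
      · intro z hz
        exact Or.inl (Or.inl ((convex_segment pp (apex n)).segment_subset
          (left_mem_segment ℝ _ _) h hz))
      · exfalso
        have h2 := top_edge_snd hn1 h
        have hd : dist y pp < 1/2 :=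
          lt_of_lt_of_le (Metric.mem_ball.mp hyB) (min_le_right _ _)
        have : dist y.2 pp.2 ≤ dist y pp := dist_snd_le' y pp
        rw [Real.dist_eq] at this
        have hpp2 : pp.2 = 0 := rfl
        rw [hpp2, sub_zero] at this
        have := le_abs_self y.2
        linarith [abs_nonneg (y.2 - 0)]
      · intro z hz
        exact Or.inr ((convex_segment (apex' n) pp).segment_subset
          (right_mem_segment ℝ _ _) h hz)
    intro z hz
    exact ⟨C_sub_X hn2 (hseg hz),
      (convex_ball pp _).segment_subset (Metric.mem_ball_self (by positivity)) hyB hz⟩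
  · obtain ⟨n, hn2, hxC⟩ := mem_X_iff.mp hx
    have hn1 : 1 ≤ n := le_trans one_le_two hn2
    have hq : 0 < x.1 := by
      rcases (C_bounds hn1 hxC).1.eq_or_lt with h | h
      · exact absurd (fst_eq_zero_imp hn1 hxC h.symm) hxp
      · exact h
    set M : ℕ := ⌈4/x.1⌉₊ + 1 with hM
    have hMlt : ∀ m : ℕ, M ≤ m → 4/x.1 < (m:ℝ) := by
      intro m hm
      have h1 : (4/x.1 : ℝ) ≤ ⌈4/x.1⌉₊ := Nat.le_ceil _
      have h2 : ((M:ℕ) : ℝ) ≤ (m:ℝ) := Nat.cast_le.mpr hm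
      have h3 : ((M:ℕ) : ℝ) = (⌈4/x.1⌉₊ : ℝ) + 1 := by rw [hM]; push_cast; ring
      linarith
    set K : Set (ℝ × ℝ) := ⋃ m ∈ {m : ℕ | m < M ∧ 2 ≤ m ∧ m ≠ n}, Cset m with hK
    have hKclosed : IsClosed K :=
      Set.Finite.isClosed_biUnion ((Set.finite_Iio M).subset (fun m hm => hm.1))
        (fun m _ => Cset_closed m)
    have hxK : x ∉ K := by
      rw [hK, Set.mem_iUnion₂]
      rintro ⟨m, ⟨hmM, hm2, hmn⟩, hxm⟩
      rcases lt_or_gt_of_ne hmn with hlt | hgt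
      · exact hxp (C_disj (le_trans one_le_two hm2) hlt hxm hxC)
      · exact hxp (C_disj hn1 hgt hxC hxm)
    obtain ⟨r1, hr1, hball1⟩ := Metric.isOpen_iff.mp hKclosed.isOpen_compl x hxK
    obtain ⟨ra, hra, hea⟩ := avoid_radius x (segment ℝ pp (apex n)) (isCompact_seg _ _).isClosed
    obtain ⟨rb, hrb, heb⟩ :=
      avoid_radius x (segment ℝ (apex n) (apex' n)) (isCompact_seg _ _).isClosed
    obtain ⟨rc, hrc, hec⟩ := avoid_radius x (segment ℝ (apex' n) pp) (isCompact_seg _ _).isClosed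
    refine ⟨min (min ε (x.1/2)) (min r1 (min ra (min rb rc))), by positivity,
      le_trans (min_le_left _ _) (min_le_left _ _), ?_⟩
    set r := min (min ε (x.1/2)) (min r1 (min ra (min rb rc))) with hr
    have hrpos : 0 < r := by positivity
    have hrq : r ≤ x.1/2 := le_trans (min_le_left _ _) (min_le_right _ _)
    have hrr1 : r ≤ r1 := le_trans (min_le_right _ _) (min_le_left _ _)
    have hrra : r ≤ ra := le_trans (min_le_right _ _) (le_trans (min_le_right _ _) (min_le_left _ _))
    have hrrb : r ≤ rb := le_trans (min_le_right _ _)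
      (le_trans (min_le_right _ _) (le_trans (min_le_right _ _) (min_le_left _ _)))
    have hrrc : r ≤ rc := le_trans (min_le_right _ _)
      (le_trans (min_le_right _ _) (le_trans (min_le_right _ _) (min_le_right _ _)))
    rw [starConvex_iff_segment_subset]
    rintro y ⟨hyX, hyB⟩
    obtain ⟨m, hm2, hyC⟩ := mem_X_iff.mp hyX
    have hyd : dist y x < r := Metric.mem_ball.mp hyB
    have hmn : m = n := by
      by_contra hne
      rcases lt_or_ge m M with hlt | hge
      · have hyK : y ∈ K := by
          rw [hK]
          exact Set.mem_biUnion ⟨hlt, hm2, hne⟩ hyC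
        exact hball1 (Metric.mem_ball.mpr (lt_of_lt_of_le hyd hrr1)) hyK
      · have h4q : 4/x.1 < (m:ℝ) := hMlt m hge
        have hm0 : (0:ℝ) < m := by
          have : (1:ℕ) ≤ m := le_trans one_le_two hm2
          exact_mod_cast Nat.lt_of_lt_of_le Nat.zero_lt_one this
        have hy1 : y.1 ≤ 2/(m:ℝ) := C_fst_le (le_trans one_le_two hm2) hyC
        have h2q : 2/(m:ℝ) < x.1/2 := by
          rw [div_lt_div_iff₀ hm0 (by norm_num)]
          have : 4 < (m:ℝ) * x.1 := by
            rw [div_lt_iff₀ hq] at h4q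
            linarith
          linarith
        have hdf : dist y.1 x.1 ≤ dist y x := dist_fst_le' y x
        rw [Real.dist_eq] at hdf
        have habs : x.1 - y.1 ≤ |y.1 - x.1| := by
          rw [abs_sub_comm]; exact le_abs_self _
        have : x.1 - y.1 < r := by linarith
        linarith
    subst hmn
    rcases hyC with (h | h) | h
    · have hxe : x ∈ segment ℝ pp (apex m) := by
        by_contra hxe
        have hempty := hea hxe
        exact absurd (Set.mem_inter (Metric.mem_ball.mpr (lt_of_lt_of_le hyd hrra)) h)
          (by rw [hempty]; exact Set.notMem_empty y)
      exact edge_case hm2 hrpos _ (fun z hz => Or.inl (Or.inl hz)) (convex_segment _ _) hxe h hyB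
    · have hxe : x ∈ segment ℝ (apex m) (apex' m) := by
        by_contra hxe
        have hempty := heb hxe
        exact absurd (Set.mem_inter (Metric.mem_ball.mpr (lt_of_lt_of_le hyd hrrb)) h)
          (by rw [hempty]; exact Set.notMem_empty y)
      exact edge_case hm2 hrpos _ (fun z hz => Or.inl (Or.inr hz)) (convex_segment _ _) hxe h hyB
    · have hxe : x ∈ segment ℝ (apex' m) pp := by
        by_contra hxe
        have hempty := hec hxe
        exact absurd (Set.mem_inter (Metric.mem_ball.mpr (lt_of_lt_of_le hyd hrrc)) h)
          (by rw [hempty]; exact Set.notMem_empty y)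
      exact edge_case hm2 hrpos _ (fun z hz => Or.inr hz) (convex_segment _ _) hxe h hyB

lemma C_pathConnected (n : ℕ) : IsPathConnected (Cset n) := by
  have h1 : IsPathConnected (segment ℝ pp (apex n)) :=
    (convex_segment _ _).isPathConnected ⟨_, left_mem_segment ℝ _ _⟩
  have h2 : IsPathConnected (segment ℝ (apex n) (apex' n)) :=
    (convex_segment _ _).isPathConnected ⟨_, left_mem_segment ℝ _ _⟩
  have h3 : IsPathConnected (segment ℝ (apex' n) pp) :=
    (convex_segment _ _).isPathConnected ⟨_, left_mem_segment ℝ _ _⟩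
  have h12 := h1.union h2 ⟨apex n, right_mem_segment ℝ _ _, left_mem_segment ℝ _ _⟩
  exact h12.union h3 ⟨apex' n, Or.inr (right_mem_segment ℝ _ _), left_mem_segment ℝ _ _⟩

lemma X_pathConnected : IsPathConnected Xset := by
  refine ⟨pp, pp_mem_X, ?_⟩
  intro y hy
  obtain ⟨n, hn2, hyC⟩ := mem_X_iff.mp hy
  exact ((C_pathConnected n).joinedIn pp (pp_mem_C n) y hyC).mono (C_sub_X hn2)

lemma X_locallyContractible : LocallyContractible ↥Xset := by
  intro x U hU
  obtain ⟨T, hT, hTU⟩ := (mem_nhds_subtype _ _ _).mp hU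
  obtain ⟨ε, hε, hball⟩ := Metric.mem_nhds_iff.mp hT
  obtain ⟨r, hr, hrε, hstar⟩ := star_nbhd x.2 hε
  set V : Set ↥Xset := Subtype.val ⁻¹' (Metric.ball (x : ℝ × ℝ) r) with hVdef
  have hV : V ∈ 𝓝 x :=
    (mem_nhds_subtype _ _ _).mpr ⟨Metric.ball _ r, Metric.ball_mem_nhds _ hr, subset_rfl⟩
  have hVU : V ⊆ U := fun v hv => hTU (hball (Metric.ball_subset_ball hrε hv))
  have hxU : x ∈ U := mem_of_mem_nhds hU
  refine ⟨V, hV, hVU, ⟨x, hxU⟩, ?_⟩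
  have key : ∀ (t : I) (v : ↥V),
      ((t : ℝ) • (x : ℝ × ℝ) + (1 - (t : ℝ)) • ((v : ↥Xset) : ℝ × ℝ))
        ∈ Xset ∩ Metric.ball (x : ℝ × ℝ) r := by
    intro t v
    exact hstar ⟨(v : ↥Xset).2, v.2⟩ t.2.1 (by linarith [t.2.2]) (by ring)
  refine ⟨⟨⟨fun p => ⟨⟨_, (key p.1 p.2).1⟩,
      hVU (show (⟨_, (key p.1 p.2).1⟩ : ↥Xset) ∈ V from (key p.1 p.2).2)⟩, ?_⟩, ?_, ?_⟩⟩
  · apply Continuous.subtype_mk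
    apply Continuous.subtype_mk
    fun_prop
  · intro v
    apply Subtype.ext
    apply Subtype.ext
    show (((0:I) : ℝ)) • (x : ℝ × ℝ) + (1 - ((0:I) : ℝ)) • _ = _
    norm_num
  · intro v
    apply Subtype.ext
    apply Subtype.ext
    show (((1:I) : ℝ)) • (x : ℝ × ℝ) + (1 - ((1:I) : ℝ)) • _ = _
    norm_num

/-- the bouquet `X = ⋃_{n ≥ 2} C_n` is path connected and locally
contractible. -/
theorem Xset_pathConnected_locallyContractible :
    IsPathConnected Xset ∧ LocallyContractible ↥Xset :=
  ⟨X_pathConnected, X_locallyContractible⟩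
end
end

section
/- Let X = ⋃_{n≥2} C_n (bouquet of triangle boundaries based at p = (0,0)), α the segment from (0,0) to (0,1), and Y = X ∪ α. Every loop β in Y based at p is path homotopic in Y to a loop γ with image contained in X. Consequently the inclusion-induced homomorphism j* : π₁(X,p) → π₁(Y,p) is surjective. -/
open unitInterval Topology

noncomputable section

lemma mem_alpha_iff {q : ℝ × ℝ} :
    q ∈ alphaSet ↔ q.1 = 0 ∧ 0 ≤ q.2 ∧ q.2 ≤ 1 := by
  constructor
  · rintro ⟨u, v, hu, hv, huv, rfl⟩
    refine ⟨by simp, by simpa using hv, by simp; linarith⟩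
  · rintro ⟨h1, h2, h3⟩
    exact ⟨1 - q.2, q.2, by linarith, h2, by ring, by
      apply Prod.ext <;> simp [h1]⟩

lemma seg_le {a b q : ℝ × ℝ} (c d : ℝ) (hq : q ∈ segment ℝ a b)
    (ha : c * a.1 + d * a.2 ≤ 0) (hb : c * b.1 + d * b.2 ≤ 0) :
    c * q.1 + d * q.2 ≤ 0 := by
  obtain ⟨u, v, hu, hv, huv, rfl⟩ := hq
  simp only [Prod.fst_add, Prod.snd_add, Prod.smul_fst, Prod.smul_snd, smul_eq_mul]
  nlinarith [mul_nonpos_of_nonneg_of_nonpos hu ha, mul_nonpos_of_nonneg_of_nonpos hv hb]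

lemma nat_bound {n : ℕ} (hn : 2 ≤ n) :
    (n : ℝ) * (2 * (n : ℝ) ^ 2 - (n : ℝ) + 2) ≤ (10 : ℝ) ^ (10 * n) := by
  have h1 : n < 10 ^ n := Nat.lt_pow_self (by norm_num)
  have h2 : n ^ 3 ≤ (10 ^ n) ^ 3 := Nat.pow_le_pow_left h1.le 3
  have hn3 : n ≤ n ^ 3 := Nat.le_self_pow (by norm_num) n
  have hpos : 0 < 10 ^ (3 * n) := Nat.pow_pos (by norm_num)
  have h3 : 2 * n ^ 3 + 2 * n ≤ 10 ^ (10 * n) := by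
    calc 2 * n ^ 3 + 2 * n ≤ 4 * n ^ 3 := by nlinarith
      _ ≤ 4 * (10 ^ n) ^ 3 := by nlinarith
      _ = 4 * 10 ^ (3 * n) := by rw [← pow_mul, Nat.mul_comm n 3]
      _ ≤ 10 ^ (3 * n) * 10 := by nlinarith
      _ = 10 ^ (3 * n + 1) := (pow_succ 10 (3 * n)).symm
      _ ≤ 10 ^ (10 * n) := Nat.pow_le_pow_right (by norm_num) (by omega)
  have hc := (Nat.cast_le (α := ℝ)).mpr h3
  push_cast at hc
  nlinarith [hc, sq_nonneg ((n : ℝ))]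

lemma Cset_bounds {n : ℕ} (hn : 2 ≤ n) {q : ℝ × ℝ} (hq : q ∈ Cset n) :
    0 ≤ q.1 ∧ q.2 ≤ n * q.1 ∧ (2 * n - 1) * q.1 ≤ 2 * q.2 := by
  have hv : ∀ c d : ℝ, c * pp.1 + d * pp.2 ≤ 0 →
      c * (apex n).1 + d * (apex n).2 ≤ 0 →
      c * (apex' n).1 + d * (apex' n).2 ≤ 0 → c * q.1 + d * q.2 ≤ 0 := by
    intro c d h1 h2 h3
    rcases hq with (h | h) | h
    exacts [seg_le c d h h1 h2, seg_le c d h h2 h3, seg_le c d h h3 h1]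
  have hx : (2 : ℝ) ≤ (n : ℝ) := by exact_mod_cast hn
  have hx0 : (0 : ℝ) < (n : ℝ) := by linarith
  have hε : (0 : ℝ) < ((10 : ℝ) ^ (10 * n))⁻¹ := by positivity
  have hεle := nat_bound hn
  have ha1 : (apex n).1 = 1 / (n : ℝ) := rfl
  have ha2 : (apex n).2 = 1 := rfl
  have hb1 : (apex' n).1 = 1 / (n : ℝ) + ((10 : ℝ) ^ (10 * n))⁻¹ * n := by
    simp [apex', apex]
  have hb2 : (apex' n).2 = 1 - ((10 : ℝ) ^ (10 * n))⁻¹ := by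
    simp [apex', apex]; ring
  set ε : ℝ := ((10 : ℝ) ^ (10 * n))⁻¹ with hεdef
  have hεmul : ε * ((10 : ℝ) ^ (10 * n)) = 1 := by
    rw [hεdef]; field_simp
  have hp1 : pp.1 = 0 := rfl
  have hp2 : pp.2 = 0 := rfl
  refine ⟨?_, ?_, ?_⟩
  · have h2n : (0:ℝ) < 1 / (n:ℝ) := by positivity
    have hεn : (0:ℝ) < ε * (n:ℝ) := mul_pos hε hx0
    have := hv (-1) 0 (by rw [hp1, hp2]; norm_num)
      (by rw [ha1, ha2]; linarith) (by rw [hb1, hb2]; linarith)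
    linarith
  · have hinv : (n:ℝ) * (1 / (n:ℝ)) = 1 := by field_simp
    have := hv (-(n : ℝ)) 1 (by rw [hp1, hp2]; norm_num)
      (by rw [ha1, ha2]; nlinarith)
      (by rw [hb1, hb2]; nlinarith [mul_pos (mul_pos hε hx0) hx0])
    linarith
  · have h2n : (0:ℝ) < 1 / (n:ℝ) := by positivity
    have hexp : (2 * (n:ℝ) - 1) * (1 / (n:ℝ)) = 2 - 1 / (n:ℝ) := by field_simp
    have hkey : ((n:ℝ) * (2 * (n:ℝ) ^ 2 - (n:ℝ) + 2)) * ε ≤ 1 := by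
      nlinarith [mul_le_mul_of_nonneg_right hεle hε.le, hεmul]
    have hkey2 : (2 * (n:ℝ) ^ 2 - (n:ℝ) + 2) * ε ≤ 1 / (n:ℝ) := by
      rw [le_div_iff₀ hx0]; nlinarith [hkey]
    have := hv (2 * (n : ℝ) - 1) (-2) (by rw [hp1, hp2]; norm_num)
      (by rw [ha1, ha2]; nlinarith)
      (by rw [hb1, hb2]; nlinarith [hkey2, hexp])
    linarith

lemma mem_Y_cases {q : ℝ × ℝ} (hq : q ∈ Yset) :
    (∃ n, 2 ≤ n ∧ q ∈ Cset n) ∨ q ∈ alphaSet := by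
  rcases hq with h | h
  · left
    obtain ⟨n, hn, hq⟩ := Set.mem_iUnion₂.mp h
    exact ⟨n, hn, hq⟩
  · exact Or.inr h

lemma Y_coord {q : ℝ × ℝ} (hq : q ∈ Yset) : 0 ≤ q.1 ∧ 0 ≤ q.2 := by
  rcases mem_Y_cases hq with ⟨n, hn, h⟩ | h
  · obtain ⟨h1, h2, h3⟩ := Cset_bounds hn h
    have hx : (2 : ℝ) ≤ (n : ℝ) := by exact_mod_cast hn
    exact ⟨h1, by nlinarith⟩
  · obtain ⟨h1, h2, h3⟩ := mem_alpha_iff.mp h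
    exact ⟨le_of_eq h1.symm, h2⟩

lemma Y_x_zero {q : ℝ × ℝ} (hq : q ∈ Yset) (h : q.1 = 0) : q ∈ alphaSet := by
  rcases mem_Y_cases hq with ⟨n, hn, hc⟩ | hα
  · obtain ⟨h1, h2, h3⟩ := Cset_bounds hn hc
    rw [h] at h2 h3
    refine mem_alpha_iff.mpr ⟨h, ?_, ?_⟩ <;> nlinarith
  · exact hα

lemma key_lemma {B : ℝ → ℝ × ℝ} (hB : Continuous B) (hY : ∀ t, B t ∈ Yset) {t₀ : ℝ}
    (h0 : (B t₀).1 = 0) (hpos : 0 < (B t₀).2) : ∀ᶠ t in 𝓝 t₀, (B t).1 = 0 := by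
  set y : ℝ := (B t₀).2 with hy
  have hev : ∀ᶠ t in 𝓝 t₀, y / 2 < (B t).2 := by
    have ht : Filter.Tendsto (fun t => (B t).2) (𝓝 t₀) (𝓝 y) :=
      (continuous_snd.comp hB).tendsto t₀
    exact ht (Ioi_mem_nhds (by linarith))
  obtain ⟨ε, hε, hball⟩ := Metric.eventually_nhds_iff_ball.mp hev
  refine Metric.eventually_nhds_iff_ball.mpr ⟨ε, hε, ?_⟩
  intro t₁ ht₁
  by_contra hx
  have hsub : Set.uIcc t₀ t₁ ⊆ Metric.ball t₀ ε :=
    (convex_ball t₀ ε).ordConnected.uIcc_subset (Metric.mem_ball_self hε) ht₁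
  have hy1 : 0 < (B t₁).2 := lt_of_le_of_lt (by linarith) (hball t₁ ht₁)
  have hx1 : 0 < (B t₁).1 := lt_of_le_of_ne (Y_coord (hY t₁)).1 (Ne.symm hx)
  have hnα : B t₁ ∉ alphaSet := fun h => hx (mem_alpha_iff.mp h).1
  obtain ⟨m, hm, hmem⟩ := (mem_Y_cases (hY t₁)).resolve_right hnα
  obtain ⟨_, hub, hlb⟩ := Cset_bounds hm hmem
  have hmR : (2 : ℝ) ≤ (m : ℝ) := by exact_mod_cast hm
  set N : ℝ := (m : ℝ) + 1 with hNdef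
  have hN : (3 : ℝ) ≤ N := by linarith
  set c : ℝ := (2 / (2 * N + 1) + 1 / N) / 2 with hcdef
  have hN0 : (0 : ℝ) < N := by linarith
  have h2N : (0 : ℝ) < 2 * N + 1 := by linarith
  have hc0 : 0 < c := by positivity
  have hab : 2 / (2 * N + 1) < 1 / N := by
    rw [div_lt_div_iff₀ h2N hN0]; nlinarith
  have hclo : 2 / (2 * N + 1) < c := by rw [hcdef]; linarith
  have hchi : c < 1 / N := by rw [hcdef]; linarith
  have hcN : c * N < 1 := (lt_div_iff₀ hN0).mp hchi
  have hc2 : 2 < c * (2 * N + 1) := (div_lt_iff₀ h2N).mp hclo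
  -- the function φ
  set φ : ℝ → ℝ := fun t => (B t).1 / (B t).2 with hφdef
  have hφcont : ContinuousOn φ (Set.uIcc t₀ t₁) := by
    apply ContinuousOn.div (continuous_fst.comp hB).continuousOn
      (continuous_snd.comp hB).continuousOn
    intro t ht
    exact ne_of_gt (lt_of_le_of_lt (by linarith) (hball t (hsub ht)))
  have hφ0 : φ t₀ = 0 := by rw [hφdef]; simp [h0]
  have hφ1 : c < φ t₁ := by
    rw [hφdef]
    simp only
    rw [lt_div_iff₀ hy1]
    -- c * (B t₁).2 ≤ c * (m * (B t₁).1) < (B t₁).1 since c * m < 1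
    have hcm : c * (m : ℝ) < 1 := by nlinarith
    nlinarith
  have hcmem : c ∈ Set.uIcc (φ t₀) (φ t₁) := by
    rw [hφ0]
    exact Set.mem_uIcc.mpr (Or.inl ⟨hc0.le, hφ1.le⟩)
  obtain ⟨t₂, ht₂mem, ht₂⟩ := intermediate_value_uIcc hφcont hcmem
  have hy2 : 0 < (B t₂).2 := lt_of_le_of_lt (by linarith) (hball t₂ (hsub ht₂mem))
  have hx2 : (B t₂).1 = c * (B t₂).2 := by
    have := ht₂
    rw [hφdef] at this
    simp only at this
    field_simp at this
    linarith [this]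
  have hnα2 : B t₂ ∉ alphaSet := by
    intro h
    have := (mem_alpha_iff.mp h).1
    nlinarith [mul_pos hc0 hy2]
  obtain ⟨k, hk, hkmem⟩ := (mem_Y_cases (hY t₂)).resolve_right hnα2
  obtain ⟨_, hub2, hlb2⟩ := Cset_bounds hk hkmem
  rcases le_or_gt (k : ℝ) N with h | h
  · have e1 : (k : ℝ) * (B t₂).1 = ((k : ℝ) * c) * (B t₂).2 := by rw [hx2]; ring
    have e2 : (k : ℝ) * c ≤ N * c := mul_le_mul_of_nonneg_right h hc0.le
    have e3 : N * c < 1 := by linarith [hcN, mul_comm c N]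
    have e4 : (N * c) * (B t₂).2 < 1 * (B t₂).2 := mul_lt_mul_of_pos_right e3 hy2
    have e5 : ((k : ℝ) * c) * (B t₂).2 ≤ (N * c) * (B t₂).2 :=
      mul_le_mul_of_nonneg_right e2 hy2.le
    linarith [hub2, e1, e4, e5]
  · have hk2 : (m : ℝ) + 2 ≤ (k : ℝ) := by
      have h1 : ((m : ℝ) + 1) < (k : ℝ) := by rw [hNdef] at h; exact h
      have h2 : m + 1 < k := by exact_mod_cast h1
      have h3 : m + 2 ≤ k := h2
      exact_mod_cast h3
    have e1 : (2 * (k : ℝ) - 1) * (B t₂).1 = ((2 * (k : ℝ) - 1) * c) * (B t₂).2 := by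
      rw [hx2]; ring
    have e2 : (2 * N + 1) * c ≤ (2 * (k : ℝ) - 1) * c := by
      apply mul_le_mul_of_nonneg_right _ hc0.le
      rw [hNdef]; linarith
    have e4 : 2 * (B t₂).2 < ((2 * N + 1) * c) * (B t₂).2 := by
      apply mul_lt_mul_of_pos_right _ hy2
      linarith [hc2, mul_comm c (2 * N + 1)]
    have e3 : ((2 * N + 1) * c) * (B t₂).2 ≤ ((2 * (k : ℝ) - 1) * c) * (B t₂).2 :=
      mul_le_mul_of_nonneg_right e2 hy2.le
    linarith [hlb2, e1, e3, e4]

def sigma0 : ℝ → ℝ := fun s => 1 - min 1 (max 0 s)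

lemma sigma0_cont : Continuous sigma0 :=
  continuous_const.sub ((continuous_const.min ((continuous_const.max continuous_id))))

lemma sigma0_mem (s : ℝ) : 0 ≤ sigma0 s ∧ sigma0 s ≤ 1 := by
  unfold sigma0
  constructor
  · have : min 1 (max 0 s) ≤ 1 := min_le_left _ _
    linarith
  · have h0 : (0:ℝ) ≤ max 0 s := le_max_left _ _
    have : (0:ℝ) ≤ min 1 (max 0 s) := le_min (by norm_num) h0
    linarith

lemma sigma0_coe (s : I) : sigma0 (s : ℝ) = 1 - (s : ℝ) := by
  unfold sigma0
  rw [max_eq_right s.2.1, min_eq_right s.2.2]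

def HrF (B : ℝ → ℝ × ℝ) : ℝ × ℝ → ℝ × ℝ := fun z =>
  if (B z.1).1 = 0 then sigma0 z.2 • B z.1 else B z.1

lemma Hr_mem {B : ℝ → ℝ × ℝ} (hY : ∀ t, B t ∈ Yset) (z : ℝ × ℝ) :
    HrF B z ∈ Yset := by
  unfold HrF
  by_cases h : (B z.1).1 = 0
  · rw [if_pos h]
    have hα := Y_x_zero (hY z.1) h
    obtain ⟨h1, h2, h3⟩ := mem_alpha_iff.mp hα
    obtain ⟨hs0, hs1⟩ := sigma0_mem z.2
    refine Or.inr (mem_alpha_iff.mpr ⟨?_, ?_, ?_⟩)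
    · show sigma0 z.2 * (B z.1).1 = 0
      rw [h, mul_zero]
    · exact mul_nonneg hs0 h2
    · calc sigma0 z.2 * (B z.1).2 ≤ 1 * 1 := by
            apply mul_le_mul hs1 h3 h2 (by norm_num)
        _ = 1 := by norm_num
  · rw [if_neg h]; exact hY z.1

lemma Hr_cont {B : ℝ → ℝ × ℝ} (hB : Continuous B) (hY : ∀ t, B t ∈ Yset) :
    Continuous (HrF B) := by
  rw [continuous_iff_continuousAt]
  rintro ⟨t, s⟩
  by_cases h1 : (B t).1 = 0
  · by_cases h2 : (B t).2 = 0
    · -- B t = 0; squeeze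
      have hBt : B t = 0 :=
        Prod.ext_iff.mpr ⟨by simpa using h1, by simpa using h2⟩
      have hH : HrF B (t, s) = 0 := by
        unfold HrF
        rw [if_pos (by simpa [hBt] using h1), hBt, smul_zero]
      unfold ContinuousAt
      rw [hH]
      apply squeeze_zero_norm (a := fun z : ℝ × ℝ => ‖B z.1‖)
      · intro z
        unfold HrF
        by_cases hz : (B z.1).1 = 0
        · rw [if_pos hz, norm_smul]
          obtain ⟨hs0, hs1⟩ := sigma0_mem z.2
          calc ‖sigma0 z.2‖ * ‖B z.1‖ ≤ 1 * ‖B z.1‖ := by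
                apply mul_le_mul_of_nonneg_right _ (norm_nonneg _)
                rw [Real.norm_eq_abs, abs_of_nonneg hs0]; exact hs1
            _ = ‖B z.1‖ := one_mul _
        · rw [if_neg hz]
      · have hcont : Continuous fun z : ℝ × ℝ => ‖B z.1‖ :=
          (hB.comp continuous_fst).norm
        have := hcont.tendsto (t, s)
        simpa [hBt] using this
    · -- (B t).2 > 0 : locally x = 0
      have hy : 0 < (B t).2 := lt_of_le_of_ne (Y_coord (hY t)).2 (Ne.symm h2)
      have hev := key_lemma hB hY h1 hy
      have hev2 : ∀ᶠ z : ℝ × ℝ in 𝓝 (t, s), (B z.1).1 = 0 :=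
        (continuousAt_fst (p := (t, s))).eventually hev
      have heq : HrF B =ᶠ[𝓝 (t, s)] fun z => sigma0 z.2 • B z.1 :=
        hev2.mono fun z hz => by unfold HrF; rw [if_pos hz]
      have hc : Continuous fun z : ℝ × ℝ => sigma0 z.2 • B z.1 :=
        (sigma0_cont.comp continuous_snd).smul (hB.comp continuous_fst)
      exact hc.continuousAt.congr heq.symm
  · have hcx : Continuous fun z : ℝ × ℝ => (B z.1).1 :=
      continuous_fst.comp (hB.comp continuous_fst)
    have hev2 : ∀ᶠ z : ℝ × ℝ in 𝓝 (t, s), (B z.1).1 ≠ 0 :=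
      hcx.continuousAt.eventually_ne h1
    have heq : HrF B =ᶠ[𝓝 (t, s)] fun z => B z.1 :=
      hev2.mono fun z hz => by unfold HrF; rw [if_neg hz]
    exact ((hB.comp continuous_fst).continuousAt).congr heq.symm

lemma pp_x_zero : pp.1 = 0 := rfl

lemma HrF_pp {B : ℝ → ℝ × ℝ} {t : ℝ} (h : B t = pp) (s : ℝ) : HrF B (t, s) = pp := by
  unfold HrF
  rw [if_pos (by rw [h]; rfl), h]
  show sigma0 s • ((0:ℝ), (0:ℝ)) = pp
  rw [Prod.smul_mk, smul_zero]
  rfl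

lemma main_claim (β : Path pY pY) :
    ∃ γ : Path pY pY, (∀ t : I, (γ t : ℝ × ℝ) ∈ Xset) ∧
      Nonempty (Path.Homotopy β γ) := by
  set B : ℝ → ℝ × ℝ := fun t => (β.extend t : ℝ × ℝ) with hBdef
  have hB : Continuous B := continuous_subtype_val.comp β.continuous_extend
  have hYB : ∀ t, B t ∈ Yset := fun t => (β.extend t).2
  have hcont := Hr_cont hB hYB
  have hB0 : B 0 = pp := by
    show ((β.extend 0 : ↥Yset) : ℝ × ℝ) = pp
    rw [Path.extend_zero]; rfl
  have hB1 : B 1 = pp := by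
    show ((β.extend 1 : ↥Yset) : ℝ × ℝ) = pp
    rw [Path.extend_one]; rfl
  have hBcoe : ∀ t : I, B (t : ℝ) = ((β t : ↥Yset) : ℝ × ℝ) := fun t => by
    show ((β.extend (t : ℝ) : ↥Yset) : ℝ × ℝ) = _
    rw [β.extend_extends']
  -- the retracted loop γ
  refine ⟨{
    toFun := fun t => ⟨HrF B ((t : ℝ), 1), Hr_mem hYB _⟩
    continuous_toFun := by
      apply Continuous.subtype_mk
      exact hcont.comp ((continuous_subtype_val).prodMk continuous_const)
    source' := Subtype.ext (by
      show HrF B (((0 : I) : ℝ), 1) = pp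
      exact HrF_pp (by simpa using hB0) 1)
    target' := Subtype.ext (by
      show HrF B (((1 : I) : ℝ), 1) = pp
      exact HrF_pp (by simpa using hB1) 1) }, ?_, ?_⟩
  · -- image in X
    intro t
    show HrF B ((t : ℝ), 1) ∈ Xset
    unfold HrF
    by_cases h : (B (t : ℝ)).1 = 0
    · rw [if_pos h]
      have : sigma0 1 = 0 := by unfold sigma0; norm_num
      rw [this, zero_smul]
      exact pp_mem_X
    · rw [if_neg h]
      rcases hYB (t : ℝ) with hX | hα
      · exact hX
      · exact absurd (mem_alpha_iff.mp hα).1 h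
  · -- the homotopy
    refine ⟨{
      toFun := fun p => ⟨HrF B ((p.2 : ℝ), (p.1 : ℝ)), Hr_mem hYB _⟩
      continuous_toFun := by
        apply Continuous.subtype_mk
        exact hcont.comp ((continuous_subtype_val.comp continuous_snd).prodMk
          (continuous_subtype_val.comp continuous_fst))
      map_zero_left := fun t => by
        apply Subtype.ext
        show HrF B ((t : ℝ), ((0 : I) : ℝ)) = ((β t : ↥Yset) : ℝ × ℝ)
        unfold HrF
        have hs : sigma0 ((0 : I) : ℝ) = 1 := by
          rw [sigma0_coe]; norm_num
        rw [← hBcoe t]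
        by_cases h : (B (t : ℝ)).1 = 0
        · rw [if_pos h, hs, one_smul]
        · rw [if_neg h]
      map_one_left := fun t => by
        apply Subtype.ext
        show HrF B ((t : ℝ), ((1 : I) : ℝ)) = HrF B ((t : ℝ), 1)
        norm_num
      prop' := fun s t ht => by
        apply Subtype.ext
        have hBt : B (t : ℝ) = pp := by
          rcases ht with h | h
          · subst h; simpa using hB0
          · have h1 : t = 1 := h
            subst h1; simpa using hB1
        show HrF B ((t : ℝ), (s : ℝ)) = ((β t : ↥Yset) : ℝ × ℝ)
        rw [HrF_pp hBt, ← hBcoe t, hBt] }⟩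

/-- every loop in `Y` based at `p` is path homotopic in `Y` to a
loop with image in `X`; consequently the inclusion-induced homomorphism
`j* : π₁(X,p) → π₁(Y,p)` is surjective. -/
theorem loop_in_Y_homotopic_into_X_and_surjectivity :
    (∀ β : Path pY pY, ∃ γ : Path pY pY,
      β.Homotopic γ ∧ ∀ t : I, (γ t : ℝ × ℝ) ∈ Xset) ∧
    (∀ β : Path pY pY, ∃ a : Path pX pX,
      Joined β (a.map jXY.continuous)) := by
  constructor
  · intro β
    obtain ⟨γ, hX, ⟨F⟩⟩ := main_claim β
    exact ⟨γ, ⟨F⟩, hX⟩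
  · intro β
    obtain ⟨γ, hX, ⟨F⟩⟩ := main_claim β
    let a : Path pX pX := {
      toFun := fun t => ⟨(γ t : ℝ × ℝ), hX t⟩
      continuous_toFun := (continuous_subtype_val.comp γ.continuous).subtype_mk _
      source' := Subtype.ext (by simp [γ.source]; rfl)
      target' := Subtype.ext (by simp [γ.target]; rfl) }
    refine ⟨a, ?_⟩
    have heq : a.map jXY.continuous = γ := by
      apply Path.ext
      funext t
      rfl
    rw [heq]
    exact ⟨{
      toFun := fun s => F.eval s
      continuous_toFun := by
        apply Path.continuous_uncurry_iff.mp
        exact F.continuous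
      source' := F.eval_zero
      target' := F.eval_one }⟩
end
end

section
/- If K is a compact, connected, locally path connected subset of ℝ² containing (0,0) and contained in Y = (⋃_{n≥2} C_n) ∪ α, where α = {0} × [0,1] and C_n is the triangle boundary with vertices (0,0), (1/n,1), (1/n,1) + 10^{-10n}(n,−1), then K contains the point (1/n, 1) for at most finitely many n. -/
open unitInterval Topology

noncomputable section

/-! ### Auxiliary lemmas for Statement 16 -/

private lemma aux_key_num (n : ℕ) (hn : 1 ≤ n) :
    2*(n:ℝ) * (((n:ℝ)^2 - (n:ℝ)/2 + 1) * ((10:ℝ)^(10*n))⁻¹) ≤ 1 := by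
  have hn1 : (1:ℝ) ≤ n := by exact_mod_cast hn
  have hP : (0:ℝ) < (10:ℝ)^(10*n) := by positivity
  have h2 : (n:ℝ) ≤ 10^n := by
    calc (n:ℝ) ≤ 2^n := by exact_mod_cast (Nat.lt_two_pow_self (n := n)).le
      _ ≤ 10^n := by gcongr <;> norm_num
  have h3 : (n:ℝ)^3 ≤ ((10:ℝ)^n)^3 := pow_le_pow_left₀ n.cast_nonneg h2 3
  have h4 : ((10:ℝ)^n)^3 = 10^(3*n) := by rw [← pow_mul]; ring_nf
  have h5 : (4:ℝ)*10^(3*n) ≤ 10^(10*n) := by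
    have he : (10:ℝ)^(10*n) = 10^(3*n) * 10^(7*n) := by rw [← pow_add]; ring_nf
    have h6 : (4:ℝ) ≤ 10^(7*n) := by
      calc (4:ℝ) ≤ 10^1 := by norm_num
        _ ≤ 10^(7*n) := by
          apply pow_le_pow_right₀ (by norm_num) (by omega)
    nlinarith [pow_pos (show (0:ℝ)<10 by norm_num) (3*n)]
  have hbig : 2*(n:ℝ)*((n:ℝ)^2 - (n:ℝ)/2 + 1) ≤ (10:ℝ)^(10*n) := by nlinarith
  have hnn : (0:ℝ) ≤ 2*(n:ℝ)*((n:ℝ)^2 - (n:ℝ)/2 + 1) := by nlinarith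
  calc 2*(n:ℝ) * (((n:ℝ)^2 - (n:ℝ)/2 + 1) * ((10:ℝ)^(10*n))⁻¹)
      = (2*(n:ℝ)*((n:ℝ)^2 - (n:ℝ)/2 + 1)) * ((10:ℝ)^(10*n))⁻¹ := by ring
    _ ≤ (10:ℝ)^(10*n) * ((10:ℝ)^(10*n))⁻¹ := by gcongr
    _ = 1 := mul_inv_cancel₀ hP.ne'

set_option maxHeartbeats 1000000 in
private lemma aux_C_bounds (n : ℕ) (hn : 1 ≤ n) {z : ℝ×ℝ} (hz : z ∈ Cset n) :
    0 ≤ z.1 ∧ ((n:ℝ) - 1/2)*z.1 ≤ z.2 ∧ z.2 ≤ (n:ℝ)*z.1 ∧ (z ≠ pp → 0 < z.1) := by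
  have hn0 : (0:ℝ) < n := by exact_mod_cast hn
  have hn1 : (1:ℝ) ≤ n := by exact_mod_cast hn
  have hinv : (n:ℝ) * (1/(n:ℝ)) = 1 := by field_simp
  have hdivpos : (0:ℝ) < 1/(n:ℝ) := by positivity
  set e : ℝ := ((10:ℝ)^(10*n))⁻¹ with he_def
  have he : (0:ℝ) < e := by positivity
  have hXe : ((n:ℝ)^2 - (n:ℝ)/2 + 1) * e ≤ (1/2)*(1/(n:ℝ)) := by
    have hk := aux_key_num n hn
    nlinarith [hk, hinv, hn0]
  have hX : (0:ℝ) ≤ (n:ℝ)^2 - (n:ℝ)/2 + 1 := by nlinarith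
  have hen : (0:ℝ) ≤ e * n := mul_nonneg he.le hn0.le
  rcases hz with (h | h) | h
  · obtain ⟨a, b, ha, hb, hab, rfl⟩ := h
    simp only [pp, apex, Prod.smul_mk, Prod.mk_add_mk, smul_eq_mul]
    refine ⟨by positivity, ?_, ?_, ?_⟩
    · nlinarith [mul_nonneg hb hdivpos.le]
    · nlinarith [hinv, hb]
    · intro hne
      rcases hb.eq_or_lt with hb0 | hb0
      · exfalso; apply hne; rw [← hb0]; norm_num
      · have : 0 < b * (1/(n:ℝ)) := mul_pos hb0 hdivpos
        nlinarith
  · obtain ⟨a, b, ha, hb, hab, rfl⟩ := h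
    simp only [pp, apex, apex', Prod.smul_mk, Prod.mk_add_mk, smul_eq_mul]
    have ha' : a = 1 - b := by linarith
    subst ha'
    have hb1 : b ≤ 1 := by linarith
    have hbXe : b * (((n:ℝ)^2 - (n:ℝ)/2 + 1) * e) ≤ (1/2)*(1/(n:ℝ)) := by
      nlinarith [mul_nonneg hX he.le, mul_le_mul_of_nonneg_left hXe hb]
    have hz1 : 0 < (1 - b) * (1/(n:ℝ)) + b * (1/(n:ℝ) + e * (n:ℝ)) := by
      nlinarith [mul_nonneg hb hen]
    refine ⟨hz1.le, ?_, ?_, fun _ => hz1⟩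
    · nlinarith [hbXe, hinv]
    · nlinarith [hinv, mul_nonneg hb he.le,
        mul_nonneg (mul_nonneg hb he.le) (mul_nonneg hn0.le hn0.le)]
  · obtain ⟨a, b, ha, hb, hab, rfl⟩ := h
    simp only [pp, apex, apex', Prod.smul_mk, Prod.mk_add_mk, smul_eq_mul]
    refine ⟨by positivity, ?_, ?_, ?_⟩
    · nlinarith [mul_le_mul_of_nonneg_left hXe ha, hinv, mul_nonneg ha hen]
    · nlinarith [hinv, mul_nonneg ha he.le,
        mul_nonneg (mul_nonneg ha he.le) (mul_nonneg hn0.le hn0.le)]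
    · intro hne
      rcases ha.eq_or_lt with ha0 | ha0
      · exfalso; apply hne; rw [← ha0]; norm_num
      · have hpos : 0 < a * (1/(n:ℝ) + e * (n:ℝ)) := by
          apply mul_pos ha0
          linarith
        linarith [hpos]

private lemma aux_alpha_bounds {z : ℝ×ℝ} (hz : z ∈ alphaSet) :
    z.1 = 0 ∧ 0 ≤ z.2 ∧ (z ≠ pp → 0 < z.2) := by
  obtain ⟨a, b, ha, hb, hab, rfl⟩ := hz
  simp only [Prod.smul_mk, Prod.mk_add_mk, smul_eq_mul]
  refine ⟨by ring, by nlinarith, ?_⟩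
  intro hne
  rcases hb.eq_or_lt with hb0 | hb0
  · exfalso; apply hne; rw [pp, ← hb0]; norm_num
  · nlinarith

/-- a compact, connected, locally path connected subset `K` of `Y`
containing the origin contains the apex `(1/n, 1)` for at most finitely many
`n`. -/
theorem finitely_many_apexes_of_peano_subcontinuum
    (K : Set (ℝ × ℝ)) (hcomp : IsCompact K) (hconn : IsConnected K)
    (hlpc : LocPathConnectedSpace ↥K) (h0 : ((0 : ℝ), (0 : ℝ)) ∈ K)
    (hKY : K ⊆ Yset) :
    {n : ℕ | 2 ≤ n ∧ apex n ∈ K}.Finite := by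
  by_contra hfin
  have hS : {n : ℕ | 2 ≤ n ∧ apex n ∈ K}.Infinite := hfin
  haveI := hlpc
  set q : ℝ × ℝ := ((0:ℝ), (1:ℝ)) with hq_def
  -- distance from q to apex m is 1/m
  have hdistq : ∀ m : ℕ, 1 ≤ m → dist q (apex m) = 1/(m:ℝ) := by
    intro m hm
    have hm0 : (0:ℝ) < m := by exact_mod_cast hm
    simp [hq_def, apex, Prod.dist_eq, Real.dist_eq,
      abs_of_nonneg (by positivity : (0:ℝ) ≤ 1/(m:ℝ))]
  -- pick apexes arbitrarily close to q
  have hpick : ∀ ε : ℝ, 0 < ε → ∃ m : ℕ, (2 ≤ m ∧ apex m ∈ K) ∧ 1/(m:ℝ) < ε := by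
    intro ε hε
    obtain ⟨m, hmS, hmgt⟩ := hS.exists_gt ⌈ε⁻¹⌉₊
    have hm0 : (0:ℝ) < m := by
      have : (0:ℕ) < m := lt_of_lt_of_le (by norm_num) hmS.1
      exact_mod_cast this
    refine ⟨m, hmS, ?_⟩
    have h1 : ε⁻¹ ≤ (⌈ε⁻¹⌉₊ : ℝ) := Nat.le_ceil _
    have h2 : ((⌈ε⁻¹⌉₊ : ℕ) : ℝ) < m := by exact_mod_cast hmgt
    rw [div_lt_iff₀ hm0]
    have h3 : ε * ε⁻¹ < ε * m := by
      apply mul_lt_mul_of_pos_left (lt_of_le_of_lt h1 h2) hε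
    rw [mul_inv_cancel₀ hε.ne'] at h3
    linarith [h3]
  -- q ∈ K since K is closed
  have hqK : q ∈ K := by
    rw [← hcomp.isClosed.closure_eq]
    rw [Metric.mem_closure_iff]
    intro ε hε
    obtain ⟨m, hmS, hm⟩ := hpick ε hε
    have hm1 : 1 ≤ m := le_trans (by norm_num) hmS.1
    exact ⟨apex m, hmS.2, by rw [hdistq m hm1]; exact hm⟩
  set q' : ↥K := ⟨q, hqK⟩ with hq'_def
  -- path connected neighborhood inside the ball of radius 1/2 around q
  have hV : (Subtype.val ⁻¹' (Metric.ball q (1/2)) : Set ↥K) ∈ 𝓝 q' := by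
    apply IsOpen.mem_nhds (Metric.isOpen_ball.preimage continuous_subtype_val)
    simp [Metric.mem_ball, hq'_def]
  obtain ⟨U, ⟨hUnhds, hUpc⟩, hUV⟩ := (@path_connected_basis _ _ hlpc q').mem_iff.mp hV
  obtain ⟨ε, hε, hball⟩ := Metric.mem_nhds_iff.mp hUnhds
  obtain ⟨n, hnS, hnε⟩ := hpick ε hε
  have hn2 : 2 ≤ n := hnS.1
  have hn1 : 1 ≤ n := le_trans (by norm_num) hn2
  have hn0 : (0:ℝ) < n := by exact_mod_cast lt_of_lt_of_le Nat.zero_lt_two hn2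
  have hN2 : (2:ℝ) ≤ n := by exact_mod_cast hn2
  have hinv : (n:ℝ) * (1/(n:ℝ)) = 1 := by field_simp
  set an : ↥K := ⟨apex n, hnS.2⟩ with han_def
  have hanU : an ∈ U := by
    apply hball
    rw [Metric.mem_ball, Subtype.dist_eq, han_def, hq'_def, dist_comm]
    simpa [hdistq n hn1] using hnε
  have hq'U : q' ∈ U := mem_of_mem_nhds hUnhds
  obtain ⟨γ, hγ⟩ := hUpc.joinedIn an hanU q' hq'U
  -- the image of the path
  set T : Set (ℝ × ℝ) := Set.range (fun t => ((γ t : ↥K) : ℝ × ℝ)) with hT_def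
  have hTconn : IsPreconnected T :=
    isPreconnected_range (continuous_subtype_val.comp γ.continuous)
  have hTK : ∀ z ∈ T, z ∈ K := by rintro z ⟨t, rfl⟩; exact (γ t).2
  have hTball : ∀ z ∈ T, dist z q < 1/2 := by
    rintro z ⟨t, rfl⟩
    have := hUV (hγ t)
    simpa [Metric.mem_ball, Subtype.dist_eq] using this
  have hTp : ∀ z ∈ T, z ≠ pp := by
    intro z hz hzp
    have h := hTball z hz
    rw [hzp] at h
    have : dist pp q = 1 := by simp [pp, hq_def, Prod.dist_eq, Real.dist_eq]
    rw [this] at h; norm_num at h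
  have hanT : apex n ∈ T := ⟨0, by simp [han_def]⟩
  have hqT : q ∈ T := ⟨1, by simp [hq'_def]⟩
  -- the two separating open sets
  set u : Set (ℝ × ℝ) :=
    {z | 0 < z.2 ∧ ((n:ℝ) - 5/8)*z.1 < z.2 ∧ z.2 < ((n:ℝ) + 1/8)*z.1} with hu_def
  set v : Set (ℝ × ℝ) :=
    {z | ((n:ℝ) + 1/4)*z.1 < z.2} ∪ {z | 0 < z.1 ∧ z.2 < ((n:ℝ) - 3/4)*z.1} with hv_def
  have hu : IsOpen u := by
    apply IsOpen.and (isOpen_lt continuous_const continuous_snd)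
    exact IsOpen.and (isOpen_lt (by fun_prop) continuous_snd)
      (isOpen_lt continuous_snd (by fun_prop))
  have hv : IsOpen v := by
    apply IsOpen.union (isOpen_lt (by fun_prop) continuous_snd)
    exact IsOpen.and (isOpen_lt continuous_const continuous_fst)
      (isOpen_lt continuous_snd (by fun_prop))
  have hdisj : Disjoint u v := by
    rw [Set.disjoint_left]
    rintro z ⟨hz2, hl, hr⟩ (hv1 | ⟨hz1, hv2⟩)
    · try simp only [Set.mem_setOf_eq] at hv1
      nlinarith
    · try simp only [Set.mem_setOf_eq] at hv2
      nlinarith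
  have hTuv : T ⊆ u ∪ v := by
    intro z hz
    have hzY : z ∈ Yset := hKY (hTK z hz)
    have hzp : z ≠ pp := hTp z hz
    rcases hzY with hX | hα
    · simp only [Xset, Set.mem_iUnion, Set.mem_setOf_eq] at hX
      obtain ⟨m, hm2, hzC⟩ := hX
      have hm1 : 1 ≤ m := le_trans (by norm_num) hm2
      obtain ⟨hz1nn, hzlow, hzhigh, hz1pos'⟩ := aux_C_bounds m hm1 hzC
      have hz1pos : 0 < z.1 := hz1pos' hzp
      have hM : (0:ℝ) < m := by exact_mod_cast lt_of_lt_of_le Nat.zero_lt_two hm2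
      rcases lt_trichotomy m n with hmn | hmn | hmn
    -- m < n : z is below the cone of C n
      · right; right
        have hcast : (m:ℝ) + 1 ≤ n := by exact_mod_cast hmn
        exact ⟨hz1pos, by nlinarith⟩
      · subst hmn
        left
        refine ⟨by nlinarith, by nlinarith, by nlinarith⟩
      · right; left
        have hcast : (n:ℝ) + 1 ≤ m := by exact_mod_cast hmn
        show ((n:ℝ) + 1/4)*z.1 < z.2
        nlinarith
    · obtain ⟨hz1, hz2nn, hz2pos'⟩ := aux_alpha_bounds hα
      right; left
      show ((n:ℝ) + 1/4)*z.1 < z.2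
      rw [hz1]
      simpa using hz2pos' hzp
  have hTu : T ⊆ u := by
    apply hTconn.subset_left_of_subset_union hu hv hdisj hTuv
    refine ⟨apex n, hanT, ?_, ?_, ?_⟩
    · norm_num [apex]
    · show ((n:ℝ) - 5/8) * (apex n).1 < (apex n).2
      simp only [apex]
      nlinarith [hinv, (by positivity : (0:ℝ) < 1/(n:ℝ))]
    · show (apex n).2 < ((n:ℝ) + 1/8) * (apex n).1
      simp only [apex]
      nlinarith [hinv, (by positivity : (0:ℝ) < 1/(n:ℝ))]
  obtain ⟨hq2, hql, hqr⟩ := hTu hqT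
  simp only [hq_def] at hqr
  norm_num at hqr
end
end
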